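/- arXiv:1911.11757 — 4 statements merged into one kernel-verified Lean document; each statement's English description precedes it below -/
import Mathlib

section
/- There exist constants C > 0 and L₀ > r₀ such that for every L ≥ L₀ and every triple of distinct indices i, j, k ∈ {1,2,3}, | 2 ∫_{−L}^{L} (2π − β^{⟨k⟩}_t) dt − ( −∫_{F^{(i)}_{+,L}} g_{ij,j} dσ₀ + ∫_{F^{(i)}_{−,L}} g_{ij,j} dσ₀ − ∫_{F^{(j)}_{+,L}} g_{ij,i} dσ₀ + ∫_{F^{(j)}_{−,L}} g_{ij,i} dσ₀ ) | ≤ C·L^{1−2τ}. -/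
open Real MeasureTheory

noncomputable section

/-- Points of ℝ³. -/
abbrev Pt : Type := Fin 3 → ℝ

/-- The Euclidean norm |x| on ℝ³. -/
def enorm3 (x : Pt) : ℝ := Real.sqrt (∑ i, x i ^ 2)

/-- The sign μ ∈ {+,-} as a real number. -/
def sgn (μ : Bool) : ℝ := if μ then 1 else -1

/-- The smaller of the two indices different from `i`. -/
def lo (i : Fin 3) : Fin 3 := if i = 0 then 1 else 0

/-- The larger of the two indices different from `i`. -/
def hi (i : Fin 3) : Fin 3 := if i = 2 then 1 else 2

/-- The index different from both `i` and `a` (when `i ≠ a`). -/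
def oth (i a : Fin 3) : Fin 3 := -(i + a)

/-- The partial derivative ∂ₖ g_{ij}. -/
def dg (g : Pt → Matrix (Fin 3) (Fin 3) ℝ) (i j k : Fin 3) (x : Pt) : ℝ :=
  fderiv ℝ (fun y => g y i j) x (Pi.single k 1)

/-- The second partial derivative ∂ₗ ∂ₖ g_{ij}. -/
def ddg (g : Pt → Matrix (Fin 3) (Fin 3) ℝ) (i j k l : Fin 3) (x : Pt) : ℝ :=
  fderiv ℝ (dg g i j k) x (Pi.single l 1)

/-- The Christoffel symbols Γ^m_{ab} of the metric g. -/
def chris (g : Pt → Matrix (Fin 3) (Fin 3) ℝ) (m a b : Fin 3) (x : Pt) : ℝ :=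
  (1/2) * ∑ n, (g x)⁻¹ m n * (dg g n a b x + dg g n b a x - dg g a b n x)

/-- The asymptotic flatness hypotheses: on U = {|x| > r₀}, g is a symmetric
positive-definite C² matrix field with |g_{ij} - δ_{ij}| ≤ C₀|x|^{-τ},
|∂g| ≤ C₀|x|^{-τ-1}, |∂∂g| ≤ C₀|x|^{-τ-2}. -/
def AsymptFlat (τ r₀ C₀ : ℝ) (g : Pt → Matrix (Fin 3) (Fin 3) ℝ) : Prop :=
  (∀ x : Pt, r₀ < enorm3 x → (g x).IsSymm) ∧
  (∀ x : Pt, r₀ < enorm3 x → (g x).PosDef) ∧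
  (∀ i j : Fin 3, ContDiffOn ℝ 2 (fun x => g x i j) {x : Pt | r₀ < enorm3 x}) ∧
  (∀ x : Pt, r₀ < enorm3 x → ∀ i j : Fin 3,
    |g x i j - if i = j then 1 else 0| ≤ C₀ * enorm3 x ^ (-τ)) ∧
  (∀ x : Pt, r₀ < enorm3 x → ∀ i j k : Fin 3,
    |dg g i j k x| ≤ C₀ * enorm3 x ^ (-τ - 1)) ∧
  (∀ x : Pt, r₀ < enorm3 x → ∀ i j k l : Fin 3,
    |ddg g i j k l x| ≤ C₀ * enorm3 x ^ (-τ - 2))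

/-- The point of the face x^i = a with the two remaining coordinates
(in increasing order of index) equal to s and u. -/
def facePt (i : Fin 3) (a s u : ℝ) : Pt :=
  fun m => if m = i then a else if m = lo i then s else u

/-- The point of the edge x^i = a, x^j = b (i ≠ j) with remaining coordinate t. -/
def edgePt (i j : Fin 3) (a b t : ℝ) : Pt :=
  fun m => if m = i then a else if m = j then b else t

/-- ∫_{F^{(i)}_{μ,L}} f dσ₀ : the integral of f over the face F^{(i)}_{μ,L} of
∂Cube_L with respect to 2-dimensional Lebesgue measure. -/
def faceInt (i : Fin 3) (μ : Bool) (L : ℝ) (f : Pt → ℝ) : ℝ :=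
  ∫ s in (-L)..L, ∫ u in (-L)..L, f (facePt i (sgn μ * L) s u)

/-- det h, where h is the 2×2 submatrix of g obtained by deleting row and column i. -/
def hdet (g : Pt → Matrix (Fin 3) (Fin 3) ℝ) (i : Fin 3) (x : Pt) : ℝ :=
  g x (lo i) (lo i) * g x (hi i) (hi i) - g x (lo i) (hi i) * g x (hi i) (lo i)

/-- The area density √(det h) of dσ_g on the face with normal direction i. -/
def areaDens (g : Pt → Matrix (Fin 3) (Fin 3) ℝ) (i : Fin 3) (x : Pt) : ℝ :=
  Real.sqrt (hdet g i x)

/-- The entries (h⁻¹)^{ab} of the inverse of the 2×2 submatrix h of g obtained by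
deleting row and column i (meaningful for a, b ≠ i). -/
def hinv (g : Pt → Matrix (Fin 3) (Fin 3) ℝ) (i a b : Fin 3) (x : Pt) : ℝ :=
  (if a = b then g x (oth i a) (oth i a) else -(g x a b)) / hdet g i x

/-- The components ν^m = μ g^{mi}/√(g^{ii}) of the outward g-unit normal of the
face x^i = μL. -/
def nuc (g : Pt → Matrix (Fin 3) (Fin 3) ℝ) (i : Fin 3) (μ : Bool) (m : Fin 3) (x : Pt) : ℝ :=
  sgn μ * (g x)⁻¹ m i / Real.sqrt ((g x)⁻¹ i i)

/-- The mean curvature H = -Σ_{a,b≠i} (h⁻¹)^{ab} Σ_{m,n} Γ^m_{ab} g_{mn} ν^n of the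
face F^{(i)}_{μ,L} with respect to the outward unit normal ν. -/
def meanCurv (g : Pt → Matrix (Fin 3) (Fin 3) ℝ) (i : Fin 3) (μ : Bool) (x : Pt) : ℝ :=
  -∑ a, ∑ b, (if a = i ∨ b = i then 0 else
    hinv g i a b x * ∑ m, ∑ n, chris g m a b x * g x m n * nuc g i μ n x)

/-- The integrand Σ_{j,k}(g_{jk,j} - g_{jj,k}) ν^k of the ADM mass surface integral. -/
def admIntegrand (g : Pt → Matrix (Fin 3) (Fin 3) ℝ) (i : Fin 3) (μ : Bool) (x : Pt) : ℝ :=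
  ∑ j, ∑ k, (dg g j k j x - dg g j j k x) * nuc g i μ k x

/-- B(L): the ADM mass surface integral of g over ∂Cube_L. -/
def ADM (g : Pt → Matrix (Fin 3) (Fin 3) ℝ) (L : ℝ) : ℝ :=
  (1/(16*π)) * ∑ i, ∑ μ : Bool,
    faceInt i μ L (fun x => admIntegrand g i μ x * areaDens g i x)

/-- The angle θ^{(ij)}_{μ,λ} = arccos(μλ g^{ij}/√(g^{ii} g^{jj})) between the outward
unit normals of the two faces adjacent along the edge E^{(ij)}_{μ,λ,L}. -/
def thetaAngle (g : Pt → Matrix (Fin 3) (Fin 3) ℝ) (i j : Fin 3) (μ lam : Bool) (x : Pt) : ℝ :=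
  Real.arccos (sgn μ * sgn lam * (g x)⁻¹ i j / Real.sqrt ((g x)⁻¹ i i * (g x)⁻¹ j j))

/-- ∫_{E^{(ij)}_{μ,λ,L}} f ds_g : the integral of f over the edge x^i = μL, x^j = λL
of ∂Cube_L, with arclength element ds_g = √(g_{cc}) dt, c being the remaining index. -/
def edgeInt (g : Pt → Matrix (Fin 3) (Fin 3) ℝ) (i j : Fin 3) (μ lam : Bool) (L : ℝ)
    (f : Pt → ℝ) : ℝ :=
  ∫ t in (-L)..L, f (edgePt i j (sgn μ * L) (sgn lam * L) t) *
    Real.sqrt (g (edgePt i j (sgn μ * L) (sgn lam * L) t) (oth i j) (oth i j))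

/-- The components of the outward g-unit normal ν̄ of the slicing curve C^{(k)}_t
within the plane x^k = t, along its segment lying in the face x^i = μL:
ν̄^a = μ (h⁻¹)^{ai}/√((h⁻¹)^{ii}) for a ≠ k, ν̄^k = 0, h being the 2×2 submatrix
of g deleting row and column k. -/
def nubar (g : Pt → Matrix (Fin 3) (Fin 3) ℝ) (i k : Fin 3) (μ : Bool) (n : Fin 3)
    (x : Pt) : ℝ :=
  if n = k then 0 else sgn μ * hinv g k n i x / Real.sqrt (hinv g k i i x)

/-- The geodesic curvature κ^{(k)} = -(1/g_{jj}) Σ_{m,n} Γ^m_{jj} g_{mn} ν̄^n of the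
slicing curve C^{(k)}_t within the plane x^k = t, along its segment lying in the face
x^i = μL; here j = oth i k is the tangent coordinate direction. -/
def geodCurv (g : Pt → Matrix (Fin 3) (Fin 3) ℝ) (i k : Fin 3) (μ : Bool) (x : Pt) : ℝ :=
  -(1 / g x (oth i k) (oth i k)) *
    ∑ m, ∑ n, chris g m (oth i k) (oth i k) x * g x m n * nubar g i k μ n x

/-- ∫_{C^{(k)}_t} κ^{(k)} ds_g : the integral of the geodesic curvature of the slicing
curve C^{(k)}_t = ∂Cube_L ∩ {x^k = t}, as the sum over its four segments. -/
def curveCurvInt (g : Pt → Matrix (Fin 3) (Fin 3) ℝ) (k : Fin 3) (t L : ℝ) : ℝ :=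
  ∑ i, ∑ μ : Bool, if i = k then 0 else
    ∫ s in (-L)..L,
      geodCurv g i k μ (edgePt i k (sgn μ * L) t s) *
        Real.sqrt (g (edgePt i k (sgn μ * L) t s) (oth i k) (oth i k))

/-- The turning angle arccos(-μλ g_{ij}/√(g_{ii} g_{jj})) of the slicing curve
C^{(k)}_t at its vertex (x^i, x^j) = (μL, λL), where {i,j} = {1,2,3} \ {k}. -/
def turnAngle (g : Pt → Matrix (Fin 3) (Fin 3) ℝ) (k : Fin 3) (μ lam : Bool)
    (t L : ℝ) : ℝ :=
  Real.arccos (-(sgn μ * sgn lam) *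
      g (edgePt (lo k) (hi k) (sgn μ * L) (sgn lam * L) t) (lo k) (hi k) /
    Real.sqrt (g (edgePt (lo k) (hi k) (sgn μ * L) (sgn lam * L) t) (lo k) (lo k) *
               g (edgePt (lo k) (hi k) (sgn μ * L) (sgn lam * L) t) (hi k) (hi k)))

/-- β^{⟨k⟩}_t : the sum of the four turning angles of the slicing curve C^{(k)}_t. -/
def betaSum (g : Pt → Matrix (Fin 3) (Fin 3) ℝ) (k : Fin 3) (t L : ℝ) : ℝ :=
  ∑ μ : Bool, ∑ lam : Bool, turnAngle g k μ lam t L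

/-- The g-Laplacian Δ_g x^k = -Σ_{a,b} g^{ab} Γ^k_{ab} of the coordinate function x^k. -/
def lapCoord (g : Pt → Matrix (Fin 3) (Fin 3) ℝ) (k : Fin 3) (x : Pt) : ℝ :=
  -∑ a, ∑ b, (g x)⁻¹ a b * chris g k a b x

/-- The directional derivative ∂_m √(g^{kk}) of |∇x^k| = √(g^{kk}). -/
def dlenGrad (g : Pt → Matrix (Fin 3) (Fin 3) ℝ) (k m : Fin 3) (x : Pt) : ℝ :=
  fderiv ℝ (fun y => Real.sqrt ((g y)⁻¹ k k)) x (Pi.single m 1)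

section Aux

lemma continuous_enorm3 : Continuous enorm3 := by
  unfold enorm3
  exact Real.continuous_sqrt.comp (by fun_prop)

lemma abs_coord_le_enorm3 (x : Pt) (i : Fin 3) : |x i| ≤ enorm3 x := by
  rw [← Real.sqrt_sq_eq_abs]
  exact Real.sqrt_le_sqrt (Finset.single_le_sum (f := fun m => x m ^ 2)
    (fun m _ => sq_nonneg _) (Finset.mem_univ i))

lemma isOpen_U (r₀ : ℝ) : IsOpen {x : Pt | r₀ < enorm3 x} :=
  isOpen_lt continuous_const continuous_enorm3

lemma facePt_apply_self (i : Fin 3) (a s u : ℝ) : facePt i a s u i = a := by simp [facePt]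

lemma edgePt_apply_self (i j : Fin 3) (a b t : ℝ) : edgePt i j a b t i = a := by simp [edgePt]

lemma le_enorm3_facePt (i : Fin 3) (a s u : ℝ) : |a| ≤ enorm3 (facePt i a s u) := by
  have h := abs_coord_le_enorm3 (facePt i a s u) i
  rwa [facePt_apply_self] at h

lemma le_enorm3_edgePt (i j : Fin 3) (a b t : ℝ) : |a| ≤ enorm3 (edgePt i j a b t) := by
  have h := abs_coord_le_enorm3 (edgePt i j a b t) i
  rwa [edgePt_apply_self] at h

lemma abs_sgn_mul (μ : Bool) {L : ℝ} (h : 0 ≤ L) : |sgn μ * L| = L := by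
  cases μ <;> simp [sgn, abs_of_nonneg h]

lemma eq_lo_or_hi : ∀ {i j : Fin 3}, j ≠ i → j = lo i ∨ j = hi i := by decide

lemma facePt_hi (i : Fin 3) (a s u : ℝ) :
    facePt i a s u = facePt i a s 0 + u • (Pi.single (hi i) 1 : Pt) := by
  funext m
  fin_cases i <;> fin_cases m <;>
    simp [facePt, lo, hi, Pi.single_apply, Fin.ext_iff]

lemma facePt_lo (i : Fin 3) (a s u : ℝ) :
    facePt i a s u = facePt i a 0 u + s • (Pi.single (lo i) 1 : Pt) := by
  funext m
  fin_cases i <;> fin_cases m <;>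
    simp [facePt, lo, hi, Pi.single_apply, Fin.ext_iff]

lemma facePt_eq_edgePt_hi (i : Fin 3) (a s b : ℝ) :
    facePt i a s b = edgePt i (hi i) a b s := by
  funext m
  fin_cases i <;> fin_cases m <;> simp [facePt, edgePt, lo, hi, Fin.ext_iff]

lemma facePt_eq_edgePt_lo (i : Fin 3) (a b u : ℝ) :
    facePt i a b u = edgePt i (lo i) a b u := by
  funext m
  fin_cases i <;> fin_cases m <;> simp [facePt, edgePt, lo, hi, Fin.ext_iff]

lemma edgePt_comm {i j : Fin 3} (h : i ≠ j) (a b t : ℝ) :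
    edgePt i j a b t = edgePt j i b a t := by
  funext m
  simp only [edgePt]
  rcases eq_or_ne m i with rfl | hmi <;> rcases eq_or_ne m j with rfl | hmj <;> simp_all

lemma continuous_facePt (i : Fin 3) (a : ℝ) :
    Continuous (fun p : ℝ × ℝ => facePt i a p.1 p.2) := by
  unfold facePt
  refine continuous_pi fun m => ?_
  split_ifs <;> [exact continuous_const; exact continuous_fst; exact continuous_snd]

lemma continuous_facePt1 (i : Fin 3) (a u : ℝ) : Continuous (fun s => facePt i a s u) := by
  unfold facePt
  refine continuous_pi fun m => ?_
  split_ifs <;> [exact continuous_const; exact continuous_id; exact continuous_const]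

lemma continuous_facePt2 (i : Fin 3) (a s : ℝ) : Continuous (fun u => facePt i a s u) := by
  unfold facePt
  refine continuous_pi fun m => ?_
  split_ifs <;> [exact continuous_const; exact continuous_const; exact continuous_id]

lemma continuous_edgePt (i j : Fin 3) (a b : ℝ) : Continuous (fun t => edgePt i j a b t) := by
  unfold edgePt
  refine continuous_pi fun m => ?_
  split_ifs <;> [exact continuous_const; exact continuous_const; exact continuous_id]

end Aux
section Arcsin

lemma arcsin_sub_le_sq_of_nonneg {y : ℝ} (h0 : 0 ≤ y) (h2 : y ≤ 1/2) :
    |Real.arcsin y - y| ≤ y ^ 2 := by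
  rcases eq_or_lt_of_le h0 with rfl | hy
  · simp
  have hπ := Real.pi_gt_three
  have hx0 : 0 < Real.arcsin y := Real.arcsin_pos.2 hy
  have hsin : Real.sin (Real.arcsin y) = y := Real.sin_arcsin (by linarith) (by linarith)
  have hyx : y ≤ Real.arcsin y := by
    have h := Real.sin_le hx0.le; rw [hsin] at h; exact h
  have hs1 : (1:ℝ) - 1 ^ 3 / 4 < Real.sin 1 := by
    have := Real.sin_gt_sub_cube (x := (1:ℝ)) one_pos; norm_num at this ⊢; linarith
  have hx1 : Real.arcsin y ≤ 1 :=
    (Real.arcsin_le_iff_le_sin ⟨by linarith, by linarith⟩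
      ⟨by linarith, by linarith⟩).2 (by norm_num at hs1 ⊢; linarith)
  have hcube : Real.arcsin y - Real.arcsin y ^ 3 / 4 < Real.sin (Real.arcsin y) := by
    have := Real.sin_gt_sub_cube hx0; nlinarith [pow_pos hx0 3]
  rw [hsin] at hcube
  set x := Real.arcsin y with hxdef
  have hsq : x ^ 2 ≤ 1 := by nlinarith
  have hx43 : x ≤ 4/3 * y := by
    nlinarith [mul_nonneg hx0.le (sub_nonneg.2 hsq)]
  have hcb : x ^ 3 ≤ (4/3 * y) ^ 3 := by
    exact pow_le_pow_left₀ hx0.le hx43 3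
  rw [abs_le]
  constructor
  · nlinarith [sq_nonneg y]
  · nlinarith [sq_nonneg y]

lemma abs_arcsin_sub_le {y : ℝ} (h : |y| ≤ 1/2) : |Real.arcsin y - y| ≤ y ^ 2 := by
  rcases le_or_gt 0 y with h0 | h0
  · exact arcsin_sub_le_sq_of_nonneg h0 (le_trans (le_abs_self y) h)
  · have h' : -y ≤ 1/2 := by rwa [abs_of_neg h0] at h
    have := arcsin_sub_le_sq_of_nonneg (neg_nonneg.2 h0.le) h'
    rw [Real.arcsin_neg] at this
    have e1 : -Real.arcsin y - -y = -(Real.arcsin y - y) := by ring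
    have e2 : (-y) ^ 2 = y ^ 2 := by ring
    rw [e1, abs_neg, e2] at this
    exact this

end Arcsin
section Analysis

variable {τ r₀ C₀ : ℝ} {g : Pt → Matrix (Fin 3) (Fin 3) ℝ}

lemma entry_contOn (hg : AsymptFlat τ r₀ C₀ g) (i j : Fin 3) :
    ContinuousOn (fun x => g x i j) {x : Pt | r₀ < enorm3 x} :=
  (hg.2.2.1 i j).continuousOn

lemma entry_diffAt (hg : AsymptFlat τ r₀ C₀ g) {x : Pt} (hx : r₀ < enorm3 x) (i j : Fin 3) :
    DifferentiableAt ℝ (fun y => g y i j) x :=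
  ((hg.2.2.1 i j).differentiableOn (by norm_num)).differentiableAt
    ((isOpen_U r₀).mem_nhds hx)

lemma dg_contOn (hg : AsymptFlat τ r₀ C₀ g) (i j k : Fin 3) :
    ContinuousOn (dg g i j k) {x : Pt | r₀ < enorm3 x} := by
  have h := (hg.2.2.1 i j).continuousOn_fderiv_of_isOpen (isOpen_U r₀) (by norm_num)
  have := ((ContinuousLinearMap.apply ℝ ℝ (Pi.single k 1 : Pt)).continuous).comp_continuousOn h
  exact this

lemma hasDerivAt_entry_line (hg : AsymptFlat τ r₀ C₀ g) (i j : Fin 3) (c v : Pt) (u : ℝ)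
    (h : r₀ < enorm3 (c + u • v)) :
    HasDerivAt (fun t : ℝ => g (c + t • v) i j)
      (fderiv ℝ (fun y => g y i j) (c + u • v) v) u := by
  have hline : HasDerivAt (fun t : ℝ => c + t • v) v u := by
    simpa using ((hasDerivAt_id u).smul_const v).const_add c
  exact ((entry_diffAt hg h i j).hasFDerivAt).comp_hasDerivAt u hline

end Analysis
section FTC

variable {τ r₀ C₀ : ℝ} {g : Pt → Matrix (Fin 3) (Fin 3) ℝ}

lemma faceInt_dg (hg : AsymptFlat τ r₀ C₀ g) {L : ℝ} (hr₀ : 0 < r₀) (hL : r₀ < L)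
    (p q c d : Fin 3) (hdc : d ≠ c) (μ : Bool) :
    faceInt c μ L (fun x => dg g p q d x)
      = ∫ t in (-L)..L,
          (g (edgePt c d (sgn μ * L) L t) p q - g (edgePt c d (sgn μ * L) (-L) t) p q) := by
  have hL0 : 0 < L := lt_trans hr₀ hL
  set a := sgn μ * L with ha
  have hmem : ∀ s u : ℝ, r₀ < enorm3 (facePt c a s u) := by
    intro s u
    have h1 := le_enorm3_facePt c a s u
    rw [ha, abs_sgn_mul μ hL0.le] at h1
    linarith
  rcases eq_lo_or_hi hdc with hd | hd
  · -- d = lo c : swap the integrals, then FTC in the (new) inner integral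
    subst hd
    have hle : (-L) ≤ L := by linarith
    have hcont2 : ContinuousOn (Function.uncurry fun s u =>
        dg g p q (lo c) (facePt c a s u)) (Set.Icc (-L) L ×ˢ Set.Icc (-L) L) := by
      refine ContinuousOn.comp (dg_contOn hg p q (lo c))
        ((continuous_facePt c a).continuousOn) (fun z _ => hmem z.1 z.2)
    have hint : MeasureTheory.Integrable
        (Function.uncurry fun s u => dg g p q (lo c) (facePt c a s u))
        ((volume.restrict (Set.Ioc (-L) L)).prod (volume.restrict (Set.Ioc (-L) L))) := by
      rw [Measure.prod_restrict, ← Measure.volume_eq_prod]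
      exact (hcont2.integrableOn_compact (isCompact_Icc.prod isCompact_Icc)).mono_set
        (Set.prod_mono Set.Ioc_subset_Icc_self Set.Ioc_subset_Icc_self)
    have hswap : (∫ s in (-L)..L, ∫ u in (-L)..L, dg g p q (lo c) (facePt c a s u))
        = ∫ u in (-L)..L, ∫ s in (-L)..L, dg g p q (lo c) (facePt c a s u) := by
      simp only [intervalIntegral.integral_of_le hle]
      exact MeasureTheory.integral_integral_swap hint
    have hftc : ∀ u : ℝ, (∫ s in (-L)..L, dg g p q (lo c) (facePt c a s u))
        = g (edgePt c (lo c) a L u) p q - g (edgePt c (lo c) a (-L) u) p q := by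
      intro u
      have hderiv : ∀ s ∈ Set.uIcc (-L) L,
          HasDerivAt (fun s => g (facePt c a s u) p q)
            (dg g p q (lo c) (facePt c a s u)) s := by
        intro s _
        have h1 := hasDerivAt_entry_line hg p q (facePt c a 0 u) (Pi.single (lo c) 1) s
          (by rw [← facePt_lo]; exact hmem s u)
        simpa only [← facePt_lo, dg] using h1
      have hcont1 : ContinuousOn (fun s => dg g p q (lo c) (facePt c a s u))
          (Set.uIcc (-L) L) :=
        ContinuousOn.comp (dg_contOn hg p q (lo c))
          (continuous_facePt1 c a u).continuousOn (fun s _ => hmem s u)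
      rw [intervalIntegral.integral_eq_sub_of_hasDerivAt hderiv
        hcont1.intervalIntegrable]
      rw [facePt_eq_edgePt_lo, facePt_eq_edgePt_lo]
    simp only [faceInt, ← ha]
    rw [hswap]
    exact intervalIntegral.integral_congr fun u _ => hftc u
  · -- d = hi c : FTC in the inner integral directly
    subst hd
    have hftc : ∀ s : ℝ, (∫ u in (-L)..L, dg g p q (hi c) (facePt c a s u))
        = g (edgePt c (hi c) a L s) p q - g (edgePt c (hi c) a (-L) s) p q := by
      intro s
      have hderiv : ∀ u ∈ Set.uIcc (-L) L,
          HasDerivAt (fun u => g (facePt c a s u) p q)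
            (dg g p q (hi c) (facePt c a s u)) u := by
        intro u _
        have h1 := hasDerivAt_entry_line hg p q (facePt c a s 0) (Pi.single (hi c) 1) u
          (by rw [← facePt_hi]; exact hmem s u)
        simpa only [← facePt_hi, dg] using h1
      have hcont1 : ContinuousOn (fun u => dg g p q (hi c) (facePt c a s u))
          (Set.uIcc (-L) L) :=
        ContinuousOn.comp (dg_contOn hg p q (hi c))
          (continuous_facePt2 c a s).continuousOn (fun u _ => hmem s u)
      rw [intervalIntegral.integral_eq_sub_of_hasDerivAt hderiv
        hcont1.intervalIntegrable]
      rw [facePt_eq_edgePt_hi, facePt_eq_edgePt_hi]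
    simp only [faceInt, ← ha]
    exact intervalIntegral.integral_congr fun s _ => hftc s

end FTC
section Key

lemma key_est {ε A B E z : ℝ} (hε0 : 0 ≤ ε) (hε : ε ≤ 1/4)
    (hA : |A - 1| ≤ ε) (hB : |B - 1| ≤ ε) (hE : |E| ≤ ε)
    (hz : z = E / Real.sqrt (A * B)) :
    |2 * Real.arcsin z - 2 * E| ≤ 12 * ε ^ 2 := by
  rw [abs_le] at hA hB hE
  obtain ⟨hA1, hA2⟩ := hA
  obtain ⟨hB1, hB2⟩ := hB
  obtain ⟨hE1, hE2⟩ := hE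
  have hABpos : (0:ℝ) < A * B := by nlinarith
  set S := Real.sqrt (A * B) with hSdef
  have hS0 : 0 < S := Real.sqrt_pos.2 hABpos
  have hS2 : S ^ 2 = A * B := Real.sq_sqrt hABpos.le
  have hS34 : 3/4 ≤ S := by
    have h := Real.sqrt_le_sqrt (show (9:ℝ)/16 ≤ A * B by nlinarith)
    rwa [show Real.sqrt (9/16) = 3/4 by
      rw [show (9:ℝ)/16 = (3/4)^2 by norm_num, Real.sqrt_sq (by norm_num)]] at h
  have hS54 : S ≤ 5/4 := by
    have h := Real.sqrt_le_sqrt (show A * B ≤ (25:ℝ)/16 by nlinarith)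
    rwa [show Real.sqrt (25/16) = 5/4 by
      rw [show (25:ℝ)/16 = (5/4)^2 by norm_num, Real.sqrt_sq (by norm_num)]] at h
  have hzS : z * S = E := by
    rw [hz]; field_simp
  have hz1 : z ≤ 4/3 * ε := by
    by_contra hcon
    push_neg at hcon
    have hz0 : 0 < z := lt_of_le_of_lt (by positivity) hcon
    nlinarith [mul_le_mul_of_nonneg_right hS34 hz0.le]
  have hz2 : -(4/3 * ε) ≤ z := by
    by_contra hcon
    push_neg at hcon
    have hz0 : z < 0 := lt_of_lt_of_le hcon (by linarith)
    nlinarith [mul_le_mul_of_nonneg_right hS34 (neg_nonneg.2 hz0.le)]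
  have hzhalf : |z| ≤ 1/2 := abs_le.mpr ⟨by linarith, by linarith⟩
  have harc := abs_arcsin_sub_le hzhalf
  rw [abs_le] at harc
  have hzsq : z ^ 2 ≤ (4/3 * ε) ^ 2 := by nlinarith
  have hS1 : S - 1 ≤ 3/2 * ε := by nlinarith [sq_nonneg (S - 1)]
  have hS1' : 1 - S ≤ 3 * ε := by nlinarith
  have hzw : |z * (1 - S)| ≤ 4 * ε ^ 2 := by
    rw [abs_mul]
    have h1 : |z| ≤ 4/3 * ε := abs_le.mpr ⟨hz2, hz1⟩
    have h2 : |1 - S| ≤ 3 * ε := abs_le.mpr ⟨by linarith, by linarith⟩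
    calc |z| * |1 - S| ≤ (4/3 * ε) * (3 * ε) :=
          mul_le_mul h1 h2 (abs_nonneg _) (by positivity)
      _ = 4 * ε ^ 2 := by ring
  rw [abs_le] at hzw
  rw [abs_le]
  constructor <;> linarith [hzS, hzsq]

end Key
section Beta

lemma betaSum_eq (g : Pt → Matrix (Fin 3) (Fin 3) ℝ) (k : Fin 3) (t L : ℝ) :
    2 * (2 * π - betaSum g k t L) =
      2 * Real.arcsin (-(g (edgePt (lo k) (hi k) L L t) (lo k) (hi k)) /
        Real.sqrt (g (edgePt (lo k) (hi k) L L t) (lo k) (lo k) *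
          g (edgePt (lo k) (hi k) L L t) (hi k) (hi k)))
    + 2 * Real.arcsin (g (edgePt (lo k) (hi k) L (-L) t) (lo k) (hi k) /
        Real.sqrt (g (edgePt (lo k) (hi k) L (-L) t) (lo k) (lo k) *
          g (edgePt (lo k) (hi k) L (-L) t) (hi k) (hi k)))
    + 2 * Real.arcsin (g (edgePt (lo k) (hi k) (-L) L t) (lo k) (hi k) /
        Real.sqrt (g (edgePt (lo k) (hi k) (-L) L t) (lo k) (lo k) *
          g (edgePt (lo k) (hi k) (-L) L t) (hi k) (hi k)))
    + 2 * Real.arcsin (-(g (edgePt (lo k) (hi k) (-L) (-L) t) (lo k) (hi k)) /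
        Real.sqrt (g (edgePt (lo k) (hi k) (-L) (-L) t) (lo k) (lo k) *
          g (edgePt (lo k) (hi k) (-L) (-L) t) (hi k) (hi k))) := by
  simp only [betaSum, Fintype.sum_bool, turnAngle, Real.arccos, sgn]
  norm_num
  ring

lemma lo_ne_hi : ∀ k : Fin 3, lo k ≠ hi k := by decide
lemma hi_ne_lo : ∀ k : Fin 3, hi k ≠ lo k := by decide
lemma case_lo_hi : ∀ {i j k : Fin 3}, i ≠ j → i ≠ k → j ≠ k →
    (i = lo k ∧ j = hi k) ∨ (i = hi k ∧ j = lo k) := by decide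
/-- The total turning-angle defect of the slices in the x^k-direction in terms
of face integrals of metric derivatives. -/
theorem turning_angle_face_integrals (τ r₀ C₀ : ℝ) (hτ : 1/2 < τ) (hr₀ : 0 < r₀) (hC₀ : 0 < C₀)
    (g : Pt → Matrix (Fin 3) (Fin 3) ℝ) (hg : AsymptFlat τ r₀ C₀ g) :
    ∃ C > 0, ∃ L₀ > r₀, ∀ L ≥ L₀, ∀ i j k : Fin 3, i ≠ j → i ≠ k → j ≠ k →
      |2 * (∫ t in (-L)..L, (2*π - betaSum g k t L))
       - (-(faceInt i true L (fun x => dg g i j j x))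
          + faceInt i false L (fun x => dg g i j j x)
          - faceInt j true L (fun x => dg g i j i x)
          + faceInt j false L (fun x => dg g i j i x))|
      ≤ C * L ^ (1 - 2*τ) := by
  refine ⟨96 * C₀ ^ 2 + 1, by positivity, max (r₀ + 1) ((4 * C₀ + 1) ^ τ⁻¹), ?_, ?_⟩
  · exact lt_of_lt_of_le (by linarith) (le_max_left _ _)
  intro L hLge i j k hij hik hjk
  have hτ0 : 0 < τ := by linarith
  have hL : r₀ < L := lt_of_lt_of_le (by linarith) ((le_max_left _ _).trans hLge)
  have hL0 : 0 < L := lt_trans hr₀ hL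
  have habsL : |L| = L := abs_of_pos hL0
  have habsnL : |(-L : ℝ)| = L := by rw [abs_neg]; exact habsL
  set ε := C₀ * L ^ (-τ) with hεdef
  have hε0 : 0 < ε := by positivity
  have hε14 : ε ≤ 1/4 := by
    have h4 : ((4 * C₀ + 1) ^ τ⁻¹ : ℝ) ≤ L := (le_max_right _ _).trans hLge
    have hLτ : 4 * C₀ + 1 ≤ L ^ τ := by
      calc (4 * C₀ + 1 : ℝ) = ((4 * C₀ + 1) ^ τ⁻¹) ^ τ :=
            (Real.rpow_inv_rpow (by positivity) (ne_of_gt hτ0)).symm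
        _ ≤ L ^ τ := Real.rpow_le_rpow (by positivity) h4 hτ0.le
    have hLτ0 : 0 < L ^ τ := Real.rpow_pos_of_pos hL0 τ
    rw [hεdef, Real.rpow_neg hL0.le, ← div_eq_mul_inv, div_le_iff₀ hLτ0]
    linarith
  -- uniform entry bounds on {enorm3 ≥ L}
  have hene : ∀ x : Pt, L ≤ enorm3 x → ∀ p q : Fin 3,
      |g x p q - if p = q then 1 else 0| ≤ ε := by
    intro x hx p q
    refine le_trans (hg.2.2.2.1 x (lt_of_lt_of_le hL hx) p q) ?_
    exact mul_le_mul_of_nonneg_left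
      (Real.rpow_le_rpow_of_nonpos hL0 hx (by linarith)) hC₀.le
  have hdiagB : ∀ x : Pt, L ≤ enorm3 x → ∀ p : Fin 3, |g x p p - 1| ≤ ε := by
    intro x hx p
    have h := hene x hx p p
    simpa using h
  have hoffB : ∀ x : Pt, L ≤ enorm3 x → ∀ p q : Fin 3, p ≠ q → |g x p q| ≤ ε := by
    intro x hx p q hpq
    have h := hene x hx p q
    rw [if_neg hpq, sub_zero] at h
    exact h
  -- continuity of edge entries
  have hcontE : ∀ (c d p q : Fin 3) (a b : ℝ), |a| = L →
      Continuous (fun t' : ℝ => g (edgePt c d a b t') p q) := by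
    intro c d p q a b ha
    refine (entry_contOn hg p q).comp_continuous (continuous_edgePt c d a b) (fun t' => ?_)
    have h1 := le_enorm3_edgePt c d a b t'
    rw [ha] at h1
    exact lt_of_lt_of_le hL h1
  have hedge : ∀ (c d : Fin 3) (a b t' : ℝ), |a| = L → L ≤ enorm3 (edgePt c d a b t') := by
    intro c d a b t' ha
    have h1 := le_enorm3_edgePt c d a b t'
    rwa [ha] at h1
  -- nonvanishing denominators
  have hden : ∀ (a b : ℝ), |a| = L → ∀ t' : ℝ,
      Real.sqrt (g (edgePt (lo k) (hi k) a b t') (lo k) (lo k) *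
        g (edgePt (lo k) (hi k) a b t') (hi k) (hi k)) ≠ 0 := by
    intro a b ha t'
    have hxa := hedge (lo k) (hi k) a b t' ha
    have h1 := hdiagB _ hxa (lo k)
    have h2 := hdiagB _ hxa (hi k)
    rw [abs_le] at h1 h2
    rw [Real.sqrt_ne_zero']
    nlinarith [h1.1, h1.2, h2.1, h2.2]
  -- continuity of the arcsin terms
  have hat : ∀ (a b : ℝ), |a| = L →
      Continuous (fun t' : ℝ => Real.arcsin (g (edgePt (lo k) (hi k) a b t') (lo k) (hi k) /
        Real.sqrt (g (edgePt (lo k) (hi k) a b t') (lo k) (lo k) *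
          g (edgePt (lo k) (hi k) a b t') (hi k) (hi k)))) := by
    intro a b ha
    exact Real.continuous_arcsin.comp ((hcontE _ _ _ _ a b ha).div
      (Real.continuous_sqrt.comp ((hcontE _ _ _ _ a b ha).mul (hcontE _ _ _ _ a b ha)))
      (hden a b ha))
  have hatn : ∀ (a b : ℝ), |a| = L →
      Continuous (fun t' : ℝ => Real.arcsin (-(g (edgePt (lo k) (hi k) a b t') (lo k) (hi k)) /
        Real.sqrt (g (edgePt (lo k) (hi k) a b t') (lo k) (lo k) *
          g (edgePt (lo k) (hi k) a b t') (hi k) (hi k)))) := by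
    intro a b ha
    exact Real.continuous_arcsin.comp (((hcontE _ _ _ _ a b ha).neg).div
      (Real.continuous_sqrt.comp ((hcontE _ _ _ _ a b ha).mul (hcontE _ _ _ _ a b ha)))
      (hden a b ha))
  -- the five integrands
  set f₀ : ℝ → ℝ := fun t => 2 * (2 * π - betaSum g k t L) with hf₀
  set f₁ : ℝ → ℝ := fun t => g (edgePt i j L L t) i j - g (edgePt i j L (-L) t) i j with hf₁
  set f₂ : ℝ → ℝ := fun t =>
    g (edgePt i j (-L) L t) i j - g (edgePt i j (-L) (-L) t) i j with hf₂
  set f₃ : ℝ → ℝ := fun t => g (edgePt j i L L t) i j - g (edgePt j i L (-L) t) i j with hf₃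
  set f₄ : ℝ → ℝ := fun t =>
    g (edgePt j i (-L) L t) i j - g (edgePt j i (-L) (-L) t) i j with hf₄
  have hint0 : IntervalIntegrable f₀ volume (-L) L := by
    have hfun : f₀ = fun t' =>
        2 * Real.arcsin (-(g (edgePt (lo k) (hi k) L L t') (lo k) (hi k)) /
          Real.sqrt (g (edgePt (lo k) (hi k) L L t') (lo k) (lo k) *
            g (edgePt (lo k) (hi k) L L t') (hi k) (hi k)))
        + 2 * Real.arcsin (g (edgePt (lo k) (hi k) L (-L) t') (lo k) (hi k) /
          Real.sqrt (g (edgePt (lo k) (hi k) L (-L) t') (lo k) (lo k) *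
            g (edgePt (lo k) (hi k) L (-L) t') (hi k) (hi k)))
        + 2 * Real.arcsin (g (edgePt (lo k) (hi k) (-L) L t') (lo k) (hi k) /
          Real.sqrt (g (edgePt (lo k) (hi k) (-L) L t') (lo k) (lo k) *
            g (edgePt (lo k) (hi k) (-L) L t') (hi k) (hi k)))
        + 2 * Real.arcsin (-(g (edgePt (lo k) (hi k) (-L) (-L) t') (lo k) (hi k)) /
          Real.sqrt (g (edgePt (lo k) (hi k) (-L) (-L) t') (lo k) (lo k) *
            g (edgePt (lo k) (hi k) (-L) (-L) t') (hi k) (hi k))) :=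
      funext fun t' => betaSum_eq g k t' L
    rw [hfun]
    exact (((((continuous_const.mul (hatn L L habsL)).add
      (continuous_const.mul (hat L (-L) habsL))).add
      (continuous_const.mul (hat (-L) L habsnL))).add
      (continuous_const.mul (hatn (-L) (-L) habsnL)))).intervalIntegrable (-L) L
  have hint1 : IntervalIntegrable f₁ volume (-L) L :=
    ((hcontE i j i j L L habsL).sub (hcontE i j i j L (-L) habsL)).intervalIntegrable (-L) L
  have hint2 : IntervalIntegrable f₂ volume (-L) L :=
    ((hcontE i j i j (-L) L habsnL).sub
      (hcontE i j i j (-L) (-L) habsnL)).intervalIntegrable (-L) L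
  have hint3 : IntervalIntegrable f₃ volume (-L) L :=
    ((hcontE j i i j L L habsL).sub (hcontE j i i j L (-L) habsL)).intervalIntegrable (-L) L
  have hint4 : IntervalIntegrable f₄ volume (-L) L :=
    ((hcontE j i i j (-L) L habsnL).sub
      (hcontE j i i j (-L) (-L) habsnL)).intervalIntegrable (-L) L
  have hint1n : IntervalIntegrable (fun t => -(f₁ t)) volume (-L) L := hint1.neg
  have hintG : IntervalIntegrable (fun t => -(f₁ t) + f₂ t - f₃ t + f₄ t) volume (-L) L := by
    exact ((hint1n.add hint2).sub hint3).add hint4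
  -- rewrite face integrals via FTC
  have hsgnt : sgn true = 1 := rfl
  have hsgnf : sgn false = -1 := rfl
  rw [faceInt_dg hg hr₀ hL i j i j (Ne.symm hij) true,
      faceInt_dg hg hr₀ hL i j i j (Ne.symm hij) false,
      faceInt_dg hg hr₀ hL i j j i hij true,
      faceInt_dg hg hr₀ hL i j j i hij false]
  simp only [hsgnt, hsgnf, one_mul, neg_one_mul]
  rw [show (2 : ℝ) * (∫ t in (-L)..L, (2*π - betaSum g k t L)) = ∫ t in (-L)..L, f₀ t from
    (intervalIntegral.integral_const_mul 2 _).symm]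
  have hsplit : (∫ t in (-L)..L, (f₀ t - (-(f₁ t) + f₂ t - f₃ t + f₄ t)))
      = (∫ t in (-L)..L, f₀ t)
        - (-(∫ t in (-L)..L, f₁ t) + (∫ t in (-L)..L, f₂ t)
           - (∫ t in (-L)..L, f₃ t) + (∫ t in (-L)..L, f₄ t)) := by
    rw [intervalIntegral.integral_sub hint0 hintG,
        intervalIntegral.integral_add ((hint1n.add hint2).sub hint3) hint4,
        intervalIntegral.integral_sub (hint1n.add hint2) hint3,
        intervalIntegral.integral_add hint1n hint2,
        intervalIntegral.integral_neg]
  rw [← hsplit]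
  -- pointwise bound
  have hpt : ∀ t ∈ Set.uIoc (-L) L,
      ‖f₀ t - (-(f₁ t) + f₂ t - f₃ t + f₄ t)‖ ≤ 48 * ε ^ 2 := by
    intro t _
    rw [Real.norm_eq_abs]
    simp only [hf₀, hf₁, hf₂, hf₃, hf₄]
    rw [betaSum_eq g k t L]
    have hx1 : L ≤ enorm3 (edgePt (lo k) (hi k) L L t) := hedge _ _ _ _ t habsL
    have hx2 : L ≤ enorm3 (edgePt (lo k) (hi k) L (-L) t) := hedge _ _ _ _ t habsL
    have hx3 : L ≤ enorm3 (edgePt (lo k) (hi k) (-L) L t) := hedge _ _ _ _ t habsnL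
    have hx4 : L ≤ enorm3 (edgePt (lo k) (hi k) (-L) (-L) t) := hedge _ _ _ _ t habsnL
    set x1 := edgePt (lo k) (hi k) L L t with hX1
    set x2 := edgePt (lo k) (hi k) L (-L) t with hX2
    set x3 := edgePt (lo k) (hi k) (-L) L t with hX3
    set x4 := edgePt (lo k) (hi k) (-L) (-L) t with hX4
    have k1 := key_est hε0.le hε14 (hdiagB x1 hx1 (lo k)) (hdiagB x1 hx1 (hi k))
      (by rw [abs_neg]; exact hoffB x1 hx1 _ _ (lo_ne_hi k))
      (rfl : (-(g x1 (lo k) (hi k)) / Real.sqrt (g x1 (lo k) (lo k) * g x1 (hi k) (hi k)))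
        = -(g x1 (lo k) (hi k)) / Real.sqrt (g x1 (lo k) (lo k) * g x1 (hi k) (hi k)))
    have k2 := key_est hε0.le hε14 (hdiagB x2 hx2 (lo k)) (hdiagB x2 hx2 (hi k))
      (hoffB x2 hx2 _ _ (lo_ne_hi k))
      (rfl : (g x2 (lo k) (hi k) / Real.sqrt (g x2 (lo k) (lo k) * g x2 (hi k) (hi k)))
        = g x2 (lo k) (hi k) / Real.sqrt (g x2 (lo k) (lo k) * g x2 (hi k) (hi k)))
    have k3 := key_est hε0.le hε14 (hdiagB x3 hx3 (lo k)) (hdiagB x3 hx3 (hi k))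
      (hoffB x3 hx3 _ _ (lo_ne_hi k))
      (rfl : (g x3 (lo k) (hi k) / Real.sqrt (g x3 (lo k) (lo k) * g x3 (hi k) (hi k)))
        = g x3 (lo k) (hi k) / Real.sqrt (g x3 (lo k) (lo k) * g x3 (hi k) (hi k)))
    have k4 := key_est hε0.le hε14 (hdiagB x4 hx4 (lo k)) (hdiagB x4 hx4 (hi k))
      (by rw [abs_neg]; exact hoffB x4 hx4 _ _ (lo_ne_hi k))
      (rfl : (-(g x4 (lo k) (hi k)) / Real.sqrt (g x4 (lo k) (lo k) * g x4 (hi k) (hi k)))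
        = -(g x4 (lo k) (hi k)) / Real.sqrt (g x4 (lo k) (lo k) * g x4 (hi k) (hi k)))
    rw [abs_le] at k1 k2 k3 k4 ⊢
    rcases case_lo_hi hij hik hjk with ⟨hi', hj'⟩ | ⟨hi', hj'⟩
    · subst hi'; subst hj'
      rw [edgePt_comm (hi_ne_lo k) L L t, edgePt_comm (hi_ne_lo k) L (-L) t,
          edgePt_comm (hi_ne_lo k) (-L) L t, edgePt_comm (hi_ne_lo k) (-L) (-L) t]
      rw [← hX1, ← hX2, ← hX3, ← hX4]
      constructor <;> linarith [k1.1, k1.2, k2.1, k2.2, k3.1, k3.2, k4.1, k4.2]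
    · subst hi'; subst hj'
      rw [edgePt_comm (hi_ne_lo k) L L t, edgePt_comm (hi_ne_lo k) L (-L) t,
          edgePt_comm (hi_ne_lo k) (-L) L t, edgePt_comm (hi_ne_lo k) (-L) (-L) t]
      rw [← hX1, ← hX2, ← hX3, ← hX4]
      have hsymE : ∀ x : Pt, L ≤ enorm3 x → g x (hi k) (lo k) = g x (lo k) (hi k) :=
        fun x hx => (hg.1 x (lt_of_lt_of_le hL hx)).apply (lo k) (hi k)
      rw [hsymE x1 hx1, hsymE x2 hx2, hsymE x3 hx3, hsymE x4 hx4]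
      constructor <;> linarith [k1.1, k1.2, k2.1, k2.2, k3.1, k3.2, k4.1, k4.2]
  calc |∫ t in (-L)..L, (f₀ t - (-(f₁ t) + f₂ t - f₃ t + f₄ t))|
      = ‖∫ t in (-L)..L, (f₀ t - (-(f₁ t) + f₂ t - f₃ t + f₄ t))‖ :=
        (Real.norm_eq_abs _).symm
    _ ≤ 48 * ε ^ 2 * |L - (-L)| := intervalIntegral.norm_integral_le_of_norm_le_const hpt
    _ ≤ (96 * C₀ ^ 2 + 1) * L ^ (1 - 2*τ) := by
        have e1 : L ^ (1 - 2*τ) = L ^ (-τ) * L ^ (-τ) * L := by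
          rw [show (1 - 2*τ) = -τ + (-τ + 1) by ring, Real.rpow_add hL0,
            Real.rpow_add hL0, Real.rpow_one]
          ring
        have hpos : 0 < L ^ (-τ) * L ^ (-τ) * L := by positivity
        calc 48 * ε ^ 2 * |L - (-L)|
            = 96 * C₀ ^ 2 * (L ^ (-τ) * L ^ (-τ) * L) := by
              rw [abs_of_pos (by linarith : (0:ℝ) < L - (-L)), hεdef]; ring
          _ ≤ (96 * C₀ ^ 2 + 1) * (L ^ (-τ) * L ^ (-τ) * L) := by nlinarith [hpos]
          _ = (96 * C₀ ^ 2 + 1) * L ^ (1 - 2*τ) := by rw [e1]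
end Beta
end
end

section
/- There exist constants C > 0 and L₀ > r₀ such that for every L ≥ L₀, every triple of distinct indices i, j, k, every sign μ ∈ {+,−}, every |t| ≤ L, and every point of the segment C^{(k)}_t ∩ F^{(i)}_{μ,L}, | κ^{(k)} − μ·( (1/2)·g_{jj,i} − g_{ij,j} ) | ≤ C·L^{−2τ−1}. (The geodesic curvature of the slicing curve on the face x^i = μL equals μ((1/2)g_{jj,i} − g_{ij,j}) up to O(L^{−2τ−1}).) -/
open Real MeasureTheory

noncomputable section

/-! ### Auxiliary estimates -/

lemma fin3_cases' (a : Fin 3) : a = 0 ∨ a = 1 ∨ a = 2 := by fin_cases a <;> simp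

lemma fin3_oth : ∀ i j k : Fin 3, i ≠ j → i ≠ k → j ≠ k → oth k i = j ∧ oth i k = j := by decide

lemma fin3_mem : ∀ i j k n : Fin 3, i ≠ j → i ≠ k → j ≠ k → (n = i ∨ n = j ∨ n = k) := by decide

lemma sgn_abs (μ : Bool) : |sgn μ| = 1 := by cases μ <;> simp [sgn]

lemma abs_mul_le' {a b A B : ℝ} (ha : |a| ≤ A) (hb : |b| ≤ B) : |a*b| ≤ A*B := by
  rw [abs_mul]; exact mul_le_mul ha hb (abs_nonneg b) ((abs_nonneg a).trans ha)

lemma near_mul' {x y dx dy ex ey Mx My : ℝ} (hx : |x - dx| ≤ ex) (hy : |y - dy| ≤ ey)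
    (hdx : |dx| ≤ Mx) (hyM : |y| ≤ My) : |x*y - dx*dy| ≤ ex*My + Mx*ey := by
  have h : x*y - dx*dy = (x - dx)*y + dx*(y - dy) := by ring
  rw [h]
  exact (abs_add_le _ _).trans (add_le_add (abs_mul_le' hx hyM) (abs_mul_le' hdx hy))

lemma abs_near' {x dx e : ℝ} (h : |x - dx| ≤ e) : |x| ≤ |dx| + e := by
  have := abs_sub_abs_le_abs_sub x dx; linarith

lemma abs_sqrt_sub_one {q : ℝ} (hq : 0 ≤ q) : |Real.sqrt q - 1| ≤ |q - 1| := by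
  have h1 : (Real.sqrt q - 1) * (Real.sqrt q + 1) = q - 1 := by
    have := Real.sq_sqrt hq; nlinarith
  have h2 : |Real.sqrt q - 1| * |Real.sqrt q + 1| = |q - 1| := by rw [← abs_mul, h1]
  nlinarith [Real.sqrt_nonneg q, abs_nonneg (Real.sqrt q - 1),
    abs_of_nonneg (by positivity : (0:ℝ) ≤ Real.sqrt q + 1)]

lemma mul_nn {x y ε : ℝ} (hε0 : 0 ≤ ε) (hε : ε ≤ 1/100) (hx : |x - 1| ≤ ε)
    (hy : |y - 1| ≤ ε) : |x*y - 1| ≤ 3*ε := by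
  have hyM : |y| ≤ 101/100 := by have := abs_near' hy; simp at this; linarith
  have h := near_mul' hx hy (by norm_num : |(1:ℝ)| ≤ 1) hyM
  rw [one_mul] at h; nlinarith
lemma mul_n3 {x y ε : ℝ} (hε0 : 0 ≤ ε) (hε : ε ≤ 1/100) (hx : |x - 1| ≤ 3*ε)
    (hy : |y - 1| ≤ ε) : |x*y - 1| ≤ 5*ε := by
  have hyM : |y| ≤ 101/100 := by have := abs_near' hy; simp at this; linarith
  have h := near_mul' hx hy (by norm_num : |(1:ℝ)| ≤ 1) hyM
  rw [one_mul] at h; nlinarith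
lemma mul_sn {x y ε : ℝ} (hε0 : 0 ≤ ε) (hε : ε ≤ 1/100) (hx : |x| ≤ ε)
    (hy : |y - 1| ≤ ε) : |x*y| ≤ 2*ε := by
  have hyM : |y| ≤ 101/100 := by have := abs_near' hy; simp at this; linarith
  have h := abs_mul_le' hx hyM; nlinarith
lemma mul_ns {x y ε : ℝ} (hε0 : 0 ≤ ε) (hε : ε ≤ 1/100) (hx : |x - 1| ≤ ε)
    (hy : |y| ≤ ε) : |x*y| ≤ 2*ε := by
  have hxM : |x| ≤ 101/100 := by have := abs_near' hx; simp at this; linarith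
  have h := abs_mul_le' hxM hy; nlinarith
lemma mul_ss {x y ε : ℝ} (hε0 : 0 ≤ ε) (hε : ε ≤ 1/100) (hx : |x| ≤ ε)
    (hy : |y| ≤ ε) : |x*y| ≤ ε := by
  have h := abs_mul_le' hx hy; nlinarith
lemma mul_s2s {x y ε : ℝ} (hε0 : 0 ≤ ε) (hε : ε ≤ 1/100) (hx : |x| ≤ 2*ε)
    (hy : |y| ≤ ε) : |x*y| ≤ ε := by
  have h := abs_mul_le' hx hy; nlinarith

lemma inv3_entry (A : Matrix (Fin 3) (Fin 3) ℝ) (a b : Fin 3) :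
    A⁻¹ a b = A.adjugate a b / A.det := by
  rw [Matrix.inv_def, Ring.inverse_eq_inv']
  simp [div_eq_inv_mul]

lemma det3_bound (A : Matrix (Fin 3) (Fin 3) ℝ) (ε : ℝ) (hε0 : 0 ≤ ε) (hε : ε ≤ 1/100)
    (hA : ∀ a b, |A a b - if a = b then 1 else 0| ≤ ε) :
    |A.det - 1| ≤ 12 * ε := by
  have e00 : |A 0 0 - 1| ≤ ε := by simpa using hA 0 0
  have e11 : |A 1 1 - 1| ≤ ε := by simpa using hA 1 1
  have e22 : |A 2 2 - 1| ≤ ε := by simpa using hA 2 2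
  have e01 : |A 0 1| ≤ ε := by simpa using hA 0 1
  have e02 : |A 0 2| ≤ ε := by simpa using hA 0 2
  have e10 : |A 1 0| ≤ ε := by simpa using hA 1 0
  have e12 : |A 1 2| ≤ ε := by simpa using hA 1 2
  have e20 : |A 2 0| ≤ ε := by simpa using hA 2 0
  have e21 : |A 2 1| ≤ ε := by simpa using hA 2 1
  have hM1 := mul_n3 hε0 hε (mul_nn hε0 hε e00 e11) e22
  have hM2 := mul_s2s hε0 hε (mul_ns hε0 hε e00 e12) e21
  have hM3 := mul_sn hε0 hε (mul_ss hε0 hε e01 e10) e22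
  have hM4 := mul_ss hε0 hε (mul_ss hε0 hε e01 e12) e20
  have hM5 := mul_ss hε0 hε (mul_ss hε0 hε e02 e10) e21
  have hM6 := mul_s2s hε0 hε (mul_sn hε0 hε e02 e11) e20
  have r1 := abs_le.mp hM1; have r2 := abs_le.mp hM2; have r3 := abs_le.mp hM3
  have r4 := abs_le.mp hM4; have r5 := abs_le.mp hM5; have r6 := abs_le.mp hM6
  rw [Matrix.det_fin_three, abs_le]
  constructor <;> linarith [r1.1, r1.2, r2.1, r2.2, r3.1, r3.2, r4.1, r4.2, r5.1, r5.2,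
    r6.1, r6.2]

set_option maxHeartbeats 2000000 in
lemma inv3_bound (A : Matrix (Fin 3) (Fin 3) ℝ) (ε : ℝ) (hε0 : 0 ≤ ε) (hε : ε ≤ 1/100)
    (hA : ∀ a b, |A a b - if a = b then 1 else 0| ≤ ε) :
    ∀ a b, |A⁻¹ a b - if a = b then 1 else 0| ≤ 20 * ε := by
  have hdet := det3_bound A ε hε0 hε hA
  have hd := abs_le.mp hdet
  have hd0 : (0:ℝ) < A.det := by nlinarith
  have hadj := Matrix.adjugate_fin_three A
  have e00 : |A 0 0 - 1| ≤ ε := by simpa using hA 0 0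
  have e11 : |A 1 1 - 1| ≤ ε := by simpa using hA 1 1
  have e22 : |A 2 2 - 1| ≤ ε := by simpa using hA 2 2
  have e01 : |A 0 1| ≤ ε := by simpa using hA 0 1
  have e02 : |A 0 2| ≤ ε := by simpa using hA 0 2
  have e10 : |A 1 0| ≤ ε := by simpa using hA 1 0
  have e12 : |A 1 2| ≤ ε := by simpa using hA 1 2
  have e20 : |A 2 0| ≤ ε := by simpa using hA 2 0
  have e21 : |A 2 1| ≤ ε := by simpa using hA 2 1
  have P1 := abs_le.mp (mul_nn hε0 hε e11 e22)
  have P2 := abs_le.mp (mul_nn hε0 hε e00 e22)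
  have P3 := abs_le.mp (mul_nn hε0 hε e00 e11)
  have S1 := abs_le.mp (mul_ss hε0 hε e12 e21)
  have S2 := abs_le.mp (mul_ss hε0 hε e02 e20)
  have S3 := abs_le.mp (mul_ss hε0 hε e01 e10)
  have T1 := abs_le.mp (mul_sn hε0 hε e01 e22)
  have T2 := abs_le.mp (mul_ss hε0 hε e02 e21)
  have T3 := abs_le.mp (mul_ss hε0 hε e01 e12)
  have T4 := abs_le.mp (mul_sn hε0 hε e02 e11)
  have T5 := abs_le.mp (mul_sn hε0 hε e10 e22)
  have T6 := abs_le.mp (mul_ss hε0 hε e12 e20)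
  have T7 := abs_le.mp (mul_ns hε0 hε e00 e12)
  have T8 := abs_le.mp (mul_ss hε0 hε e02 e10)
  have T9 := abs_le.mp (mul_ss hε0 hε e10 e21)
  have T10 := abs_le.mp (mul_ns hε0 hε e11 e20)
  have T11 := abs_le.mp (mul_ns hε0 hε e00 e21)
  have T12 := abs_le.mp (mul_ss hε0 hε e01 e20)
  intro a b
  have habs : |A.adjugate a b - (if a = b then (1:ℝ) else 0) * A.det| ≤ 17*ε := by
    rcases fin3_cases' a with rfl|rfl|rfl <;> rcases fin3_cases' b with rfl|rfl|rfl <;>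
      rw [hadj] <;> norm_num [Fin.reduceEq, Matrix.cons_val_two, Matrix.vecHead, Matrix.vecTail] <;> (try rw [if_neg (by decide)]) <;>
      rw [abs_le] <;> constructor <;>
      linarith [hd.1, hd.2, P1.1, P1.2, P2.1, P2.2, P3.1, P3.2, S1.1, S1.2, S2.1, S2.2,
        S3.1, S3.2, T1.1, T1.2, T2.1, T2.2, T3.1, T3.2, T4.1, T4.2, T5.1, T5.2, T6.1, T6.2,
        T7.1, T7.2, T8.1, T8.2, T9.1, T9.2, T10.1, T10.2, T11.1, T11.2, T12.1, T12.2]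
  have hrw : A⁻¹ a b - (if a = b then (1:ℝ) else 0)
      = (A.adjugate a b - (if a = b then (1:ℝ) else 0) * A.det) / A.det := by
    rw [inv3_entry]; field_simp
  rw [hrw, abs_div, abs_of_pos hd0, div_le_iff₀ hd0]
  nlinarith [habs, hd.1, abs_nonneg (A.adjugate a b - (if a = b then (1:ℝ) else 0) * A.det)]

lemma chris_est (g : Pt → Matrix (Fin 3) (Fin 3) ℝ) (x : Pt) (j : Fin 3) (ε D : ℝ)
    (hε0 : 0 ≤ ε) (hε : ε ≤ 1/100) (hD0 : 0 ≤ D)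
    (hI : ∀ a b, |(g x)⁻¹ a b - if a = b then 1 else 0| ≤ 20*ε)
    (hdg : ∀ a b c, |dg g a b c x| ≤ D) (m : Fin 3) :
    |chris g m j j x - (dg g m j j x - 1/2 * dg g j j m x)| ≤ 90*(ε*D) := by
  have hc3 : ∀ n, |dg g n j j x + dg g n j j x - dg g j j n x| ≤ 3*D := by
    intro n
    have h1 := abs_le.mp (hdg n j j); have h2 := abs_le.mp (hdg j j n)
    rw [abs_le]; constructor <;> linarith [h1.1, h1.2, h2.1, h2.2]
  have hsel : ∑ n, (if m = n then (1:ℝ) else 0) *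
      (dg g n j j x + dg g n j j x - dg g j j n x)
      = dg g m j j x + dg g m j j x - dg g j j m x := by simp
  have expand : ∑ n, ((g x)⁻¹ m n - if m = n then 1 else 0) *
      (dg g n j j x + dg g n j j x - dg g j j n x)
      = (∑ n, (g x)⁻¹ m n * (dg g n j j x + dg g n j j x - dg g j j n x))
        - (dg g m j j x + dg g m j j x - dg g j j m x) := by
    rw [← hsel, ← Finset.sum_sub_distrib]
    exact Finset.sum_congr rfl fun n _ => by ring
  have hrw : chris g m j j x - (dg g m j j x - 1/2 * dg g j j m x)
      = 1/2 * ∑ n, ((g x)⁻¹ m n - if m = n then 1 else 0) *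
        (dg g n j j x + dg g n j j x - dg g j j n x) := by
    unfold chris; rw [expand]; ring
  rw [hrw, abs_mul, (by norm_num : |(1:ℝ)/2| = 1/2)]
  calc 1/2 * |∑ n, ((g x)⁻¹ m n - if m = n then 1 else 0) *
        (dg g n j j x + dg g n j j x - dg g j j n x)|
      ≤ 1/2 * ∑ n, |((g x)⁻¹ m n - if m = n then 1 else 0) *
        (dg g n j j x + dg g n j j x - dg g j j n x)| := by
        have := Finset.abs_sum_le_sum_abs
          (fun n => ((g x)⁻¹ m n - if m = n then 1 else 0) *
            (dg g n j j x + dg g n j j x - dg g j j n x)) Finset.univ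
        linarith
    _ ≤ 1/2 * ∑ _n : Fin 3, (20*ε)*(3*D) := by
        have := Finset.sum_le_sum (fun n (_ : n ∈ Finset.univ) =>
          abs_mul_le' (hI m n) (hc3 n))
        linarith
    _ = 90*(ε*D) := by simp [Finset.sum_const]; ring

lemma nubar_est (g : Pt → Matrix (Fin 3) (Fin 3) ℝ) (x : Pt) (i j k : Fin 3)
    (hij : i ≠ j) (hik : i ≠ k) (hjk : j ≠ k) (μ : Bool) (ε : ℝ)
    (hε0 : 0 ≤ ε) (hε : ε ≤ 1/100)
    (hA : ∀ a b, |g x a b - if a = b then 1 else 0| ≤ ε) :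
    ∀ n, |nubar g i k μ n x - (if n = i then sgn μ else 0)| ≤ 20*ε := by
  have hlh := lo_ne_hi k
  have e1 : |g x (lo k) (lo k) - 1| ≤ ε := by simpa using hA (lo k) (lo k)
  have e2 : |g x (hi k) (hi k) - 1| ≤ ε := by simpa using hA (hi k) (hi k)
  have e3 : |g x (lo k) (hi k)| ≤ ε := by
    have := hA (lo k) (hi k); rwa [if_neg hlh, sub_zero] at this
  have e4 : |g x (hi k) (lo k)| ≤ ε := by
    have := hA (hi k) (lo k); rwa [if_neg (Ne.symm hlh), sub_zero] at this
  have hP := abs_le.mp (mul_nn hε0 hε e1 e2)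
  have hS := abs_le.mp (mul_ss hε0 hε e3 e4)
  have hhd : |hdet g k x - 1| ≤ 4*ε := by
    unfold hdet; rw [abs_le]; constructor <;> linarith [hP.1, hP.2, hS.1, hS.2]
  have hd1 := abs_le.mp hhd
  have hd0 : (0:ℝ) < hdet g k x := by nlinarith
  have hoth : oth k i = j := (fin3_oth i j k hij hik hjk).1
  have hq1 : |hinv g k i i x - 1| ≤ 6*ε := by
    have hq : hinv g k i i x = g x j j / hdet g k x := by
      unfold hinv; rw [if_pos rfl, hoth]
    have ejj : |g x j j - 1| ≤ ε := by simpa using hA j j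
    have h1 := abs_le.mp ejj
    have heq : g x j j / hdet g k x - 1 = (g x j j - hdet g k x)/hdet g k x := by
      field_simp
    rw [hq, heq, abs_div, abs_of_pos hd0, div_le_iff₀ hd0]
    have hnum : |g x j j - hdet g k x| ≤ 5*ε := by
      rw [abs_le]; constructor <;> linarith [hd1.1, hd1.2]
    nlinarith [abs_le.mp hnum]
  have hp1 : |hinv g k j i x| ≤ 2*ε := by
    have hq : hinv g k j i x = -(g x j i) / hdet g k x := by
      unfold hinv; rw [if_neg (Ne.symm hij)]
    have eji : |g x j i| ≤ ε := by
      have := hA j i; rwa [if_neg (Ne.symm hij), sub_zero] at this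
    rw [hq, abs_div, abs_neg, abs_of_pos hd0, div_le_iff₀ hd0]
    nlinarith [abs_le.mp eji]
  have hq2 := abs_le.mp hq1
  have hq0 : (0:ℝ) ≤ hinv g k i i x := by linarith
  have hsq1 := abs_le.mp ((abs_sqrt_sub_one hq0).trans hq1)
  have hsqlb : (9:ℝ)/10 ≤ Real.sqrt (hinv g k i i x) := by
    have h81 : (81:ℝ)/100 ≤ hinv g k i i x := by linarith
    calc (9:ℝ)/10 = Real.sqrt (81/100) := by
          rw [show (81:ℝ)/100 = (9/10)^2 by norm_num, Real.sqrt_sq (by norm_num)]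
      _ ≤ Real.sqrt (hinv g k i i x) := Real.sqrt_le_sqrt h81
  have hsq0 : (0:ℝ) < Real.sqrt (hinv g k i i x) := by linarith
  intro n
  rcases fin3_mem i j k n hij hik hjk with h|h|h <;> rw [h]
  · unfold nubar
    rw [if_neg hik, if_pos rfl]
    have heq : sgn μ * hinv g k i i x / Real.sqrt (hinv g k i i x) - sgn μ
        = sgn μ * ((hinv g k i i x - Real.sqrt (hinv g k i i x))
            / Real.sqrt (hinv g k i i x)) := by
      field_simp
    rw [heq, abs_mul, sgn_abs, one_mul, abs_div, abs_of_pos hsq0, div_le_iff₀ hsq0]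
    have hnum : |hinv g k i i x - Real.sqrt (hinv g k i i x)| ≤ 12*ε := by
      rw [abs_le]; constructor <;> linarith [hq2.1, hq2.2, hsq1.1, hsq1.2]
    nlinarith [abs_le.mp hnum]
  · unfold nubar
    rw [if_neg hjk, if_neg (Ne.symm hij), sub_zero, abs_div, abs_mul, sgn_abs, one_mul,
      abs_of_pos hsq0, div_le_iff₀ hsq0]
    nlinarith [abs_le.mp hp1]
  · unfold nubar
    rw [if_pos rfl, if_neg (Ne.symm hik), sub_zero, abs_zero]
    positivity

lemma geod_key (g : Pt → Matrix (Fin 3) (Fin 3) ℝ) (x : Pt) (i j k : Fin 3)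
    (hij : i ≠ j) (hik : i ≠ k) (hjk : j ≠ k) (μ : Bool) (ε D : ℝ)
    (hε0 : 0 ≤ ε) (hε : ε ≤ 1/100) (hD0 : 0 ≤ D)
    (hA : ∀ a b, |g x a b - if a = b then 1 else 0| ≤ ε)
    (hdg : ∀ a b c, |dg g a b c x| ≤ D) :
    |geodCurv g i k μ x - sgn μ * (1/2 * dg g j j i x - dg g i j j x)| ≤ 2000*(ε*D) := by
  have hoth : oth i k = j := (fin3_oth i j k hij hik hjk).2
  have hI := inv3_bound (g x) ε hε0 hε hA
  have hchris := chris_est g x j ε D hε0 hε hD0 hI hdg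
  have hεD : 90*(ε*D) ≤ 9/10*D := by nlinarith
  have hchrisb : ∀ m, |chris g m j j x| ≤ 3*D := by
    intro m
    have h := abs_le.mp (hchris m)
    have h1 := abs_le.mp (hdg m j j); have h2 := abs_le.mp (hdg j j m)
    rw [abs_le]; constructor <;> linarith [h.1, h.2, h1.1, h1.2, h2.1, h2.2]
  have hnu := nubar_est g x i j k hij hik hjk μ ε hε0 hε hA
  have hnub : ∀ n, |nubar g i k μ n x| ≤ 2 := by
    intro n
    have h := abs_near' (hnu n)
    have hw : |if n = i then sgn μ else 0| ≤ 1 := by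
      split_ifs <;> simp [sgn_abs]
    linarith
  have hV : ∀ m, |(∑ n, g x m n * nubar g i k μ n x) - (if m = i then sgn μ else 0)|
      ≤ 130*ε := by
    intro m
    have hsel : ∑ n, (if m = n then (1:ℝ) else 0) * (if n = i then sgn μ else 0)
        = (if m = i then sgn μ else 0) := by simp
    have hterm : ∀ n, |g x m n * nubar g i k μ n x
        - (if m = n then (1:ℝ) else 0) * (if n = i then sgn μ else 0)| ≤ 42*ε := by
      intro n
      have hdec : g x m n * nubar g i k μ n x
          - (if m = n then (1:ℝ) else 0) * (if n = i then sgn μ else 0)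
          = (g x m n - if m = n then 1 else 0) * nubar g i k μ n x
            + (if m = n then (1:ℝ) else 0) * (nubar g i k μ n x
              - (if n = i then sgn μ else 0)) := by ring
      rw [hdec]
      have h1 := abs_mul_le' (hA m n) (hnub n)
      have h2 := abs_mul_le' (show |if m = n then (1:ℝ) else 0| ≤ 1 by
        split_ifs <;> simp) (hnu n)
      calc _ ≤ _ := abs_add_le _ _
        _ ≤ 42*ε := by linarith
    calc |(∑ n, g x m n * nubar g i k μ n x) - (if m = i then sgn μ else 0)|
        = |∑ n, (g x m n * nubar g i k μ n x
            - (if m = n then (1:ℝ) else 0) * (if n = i then sgn μ else 0))| := by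
          rw [← hsel, ← Finset.sum_sub_distrib]
      _ ≤ ∑ n, |g x m n * nubar g i k μ n x
            - (if m = n then (1:ℝ) else 0) * (if n = i then sgn μ else 0)| :=
          Finset.abs_sum_le_sum_abs _ _
      _ ≤ ∑ _n : Fin 3, 42*ε := Finset.sum_le_sum fun n _ => hterm n
      _ ≤ 130*ε := by simp [Finset.sum_const]; linarith
  set T := dg g i j j x - 1/2 * dg g j j i x with hT
  have hTb : |T| ≤ 2*D := by
    have h1 := abs_le.mp (hdg i j j); have h2 := abs_le.mp (hdg j j i)
    rw [hT, abs_le]; constructor <;> linarith [h1.1, h1.2, h2.1, h2.2]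
  have hS : |(∑ m, ∑ n, chris g m j j x * g x m n * nubar g i k μ n x) - sgn μ * T|
      ≤ 1440*(ε*D) := by
    have hsel2 : ∑ m, (if m = i then sgn μ else 0) * T = sgn μ * T := by simp
    have hfac : ∀ m, ∑ n, chris g m j j x * g x m n * nubar g i k μ n x
        = chris g m j j x * ∑ n, g x m n * nubar g i k μ n x := by
      intro m; rw [Finset.mul_sum]; exact Finset.sum_congr rfl fun n _ => mul_assoc _ _ _
    have hterm2 : ∀ m, |chris g m j j x * (∑ n, g x m n * nubar g i k μ n x)
        - (if m = i then sgn μ else 0) * T| ≤ 480*(ε*D) := by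
      intro m
      have hdec : chris g m j j x * (∑ n, g x m n * nubar g i k μ n x)
          - (if m = i then sgn μ else 0) * T
          = chris g m j j x * ((∑ n, g x m n * nubar g i k μ n x)
              - (if m = i then sgn μ else 0))
            + (if m = i then sgn μ else 0) * (chris g m j j x - T) := by ring
      have h1 := abs_mul_le' (hchrisb m) (hV m)
      have h2 : |(if m = i then sgn μ else 0) * (chris g m j j x - T)| ≤ 90*(ε*D) := by
        by_cases hmi : m = i
        · subst hmi
          rw [if_pos rfl, abs_mul, sgn_abs, one_mul]
          exact hchris m
        · rw [if_neg hmi, zero_mul, abs_zero]; positivity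
      rw [hdec]
      calc _ ≤ _ := abs_add_le _ _
        _ ≤ 480*(ε*D) := by nlinarith
    calc |(∑ m, ∑ n, chris g m j j x * g x m n * nubar g i k μ n x) - sgn μ * T|
        = |∑ m, (chris g m j j x * (∑ n, g x m n * nubar g i k μ n x)
            - (if m = i then sgn μ else 0) * T)| := by
          rw [← hsel2, ← Finset.sum_sub_distrib]
          congr 1
          exact Finset.sum_congr rfl fun m _ => by rw [hfac m]
      _ ≤ ∑ m, |chris g m j j x * (∑ n, g x m n * nubar g i k μ n x)
            - (if m = i then sgn μ else 0) * T| := Finset.abs_sum_le_sum_abs _ _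
      _ ≤ ∑ _m : Fin 3, 480*(ε*D) := Finset.sum_le_sum fun m _ => hterm2 m
      _ = 1440*(ε*D) := by simp [Finset.sum_const]; ring
  have ejj := abs_le.mp (by simpa using hA j j : |g x j j - 1| ≤ ε)
  have hAjj0 : (0:ℝ) < g x j j := by linarith
  have hgeo : geodCurv g i k μ x
      = -(1 / g x j j) * ∑ m, ∑ n, chris g m j j x * g x m n * nubar g i k μ n x := by
    unfold geodCurv; rw [hoth]
  have heq : geodCurv g i k μ x - sgn μ * (1/2 * dg g j j i x - dg g i j j x)
      = (sgn μ * T * g x j j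
          - ∑ m, ∑ n, chris g m j j x * g x m n * nubar g i k μ n x) / g x j j := by
    rw [hgeo, hT]; field_simp; ring
  rw [heq, abs_div, abs_of_pos hAjj0, div_le_iff₀ hAjj0]
  have hnum : |sgn μ * T * g x j j
      - ∑ m, ∑ n, chris g m j j x * g x m n * nubar g i k μ n x| ≤ 1500*(ε*D) := by
    have hdec : sgn μ * T * g x j j
        - ∑ m, ∑ n, chris g m j j x * g x m n * nubar g i k μ n x
        = sgn μ * T * (g x j j - 1)
          - ((∑ m, ∑ n, chris g m j j x * g x m n * nubar g i k μ n x) - sgn μ * T) := by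
      ring
    have h1 : |sgn μ * T * (g x j j - 1)| ≤ 2*D*ε := by
      have := abs_mul_le' (abs_mul_le' (le_of_eq (sgn_abs μ)) hTb)
        (show |g x j j - 1| ≤ ε by rw [abs_le]; exact ⟨ejj.1, ejj.2⟩)
      linarith [this]
    rw [hdec]
    calc _ ≤ _ := abs_sub _ _
      _ ≤ 1500*(ε*D) := by nlinarith
  nlinarith [hnum, mul_nonneg hε0 hD0]

/-- The geodesic curvature of the slicing curve C^{(k)}_t on the face x^i = μL
equals μ((1/2)g_{jj,i} - g_{ij,j}) up to O(L^(-2τ-1)). -/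
theorem geodesic_curvature_asymptotics (τ r₀ C₀ : ℝ) (hτ : 1/2 < τ) (hr₀ : 0 < r₀) (hC₀ : 0 < C₀)
    (g : Pt → Matrix (Fin 3) (Fin 3) ℝ) (hg : AsymptFlat τ r₀ C₀ g) :
    ∃ C > 0, ∃ L₀ > r₀, ∀ L ≥ L₀, ∀ i j k : Fin 3, i ≠ j → i ≠ k → j ≠ k →
      ∀ μ : Bool, ∀ t : ℝ, |t| ≤ L → ∀ s : ℝ, |s| ≤ L →
        |geodCurv g i k μ (edgePt i k (sgn μ * L) t s)
         - sgn μ * ((1/2) * dg g j j i (edgePt i k (sgn μ * L) t s)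
                    - dg g i j j (edgePt i k (sgn μ * L) t s))|
        ≤ C * L ^ (-2*τ - 1) := by
  obtain ⟨hsym, hpos, hC2, hg0, hg1, hg2⟩ := hg
  refine ⟨2000*C₀^2, by positivity, max (r₀+1) (max 1 ((100*C₀)^(1/τ))),
    lt_of_lt_of_le (by linarith) (le_max_left _ _), ?_⟩
  intro L hL i j k hij hik hjk μ t ht s hs
  set x := edgePt i k (sgn μ * L) t s with hx
  have hL1 : (1:ℝ) ≤ L := le_trans ((le_max_left _ _).trans (le_max_right _ _)) hL
  have hLr : r₀ < L := lt_of_lt_of_le (by linarith) ((le_max_left _ _).trans hL)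
  have hL0 : (0:ℝ) < L := by linarith
  have hτ0 : 0 < τ := by linarith
  have hxi : x i = sgn μ * L := by simp [hx, edgePt]
  have hnorm : L ≤ enorm3 x := by
    have h2 : (sgn μ * L)^2 = L^2 := by cases μ <;> simp [sgn] <;> ring
    have h1 : L^2 ≤ ∑ m, x m ^ 2 := by
      have := Finset.single_le_sum (f := fun m => x m ^2) (fun m _ => sq_nonneg _)
        (Finset.mem_univ i)
      simp only [hxi, h2] at this
      exact this
    calc L = Real.sqrt (L^2) := (Real.sqrt_sq hL0.le).symm
      _ ≤ Real.sqrt (∑ m, x m^2) := Real.sqrt_le_sqrt h1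
      _ = enorm3 x := rfl
  have hxr : r₀ < enorm3 x := lt_of_lt_of_le hLr hnorm
  set ε := C₀ * L^(-τ) with hε
  set D := C₀ * L^(-τ-1) with hD
  have hLτ : (0:ℝ) < L^τ := Real.rpow_pos_of_pos hL0 τ
  have hεb : ε ≤ 1/100 := by
    have hM : (100*C₀)^(1/τ) ≤ L :=
      le_trans ((le_max_right _ _).trans (le_max_right _ _)) hL
    have h3 : ((100*C₀)^(1/τ))^τ ≤ L^τ :=
      Real.rpow_le_rpow (Real.rpow_nonneg (by positivity) _) hM hτ0.le
    rw [← Real.rpow_mul (by positivity), one_div, inv_mul_cancel₀ (ne_of_gt hτ0),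
      Real.rpow_one] at h3
    calc ε = C₀ / L^τ := by rw [hε, Real.rpow_neg hL0.le]; ring
      _ ≤ 1/100 := by rw [div_le_iff₀ hLτ]; linarith
  have hε0 : (0:ℝ) ≤ ε := by positivity
  have hD0 : (0:ℝ) ≤ D := by positivity
  have hmono : enorm3 x ^ (-τ) ≤ L ^ (-τ) :=
    Real.rpow_le_rpow_of_nonpos hL0 hnorm (by linarith)
  have hmono2 : enorm3 x ^ (-τ-1) ≤ L ^ (-τ-1) :=
    Real.rpow_le_rpow_of_nonpos hL0 hnorm (by linarith)
  have hA : ∀ a b, |g x a b - if a = b then 1 else 0| ≤ ε := fun a b =>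
    (hg0 x hxr a b).trans (mul_le_mul_of_nonneg_left hmono hC₀.le)
  have hdgb : ∀ a b c, |dg g a b c x| ≤ D := fun a b c =>
    (hg1 x hxr a b c).trans (mul_le_mul_of_nonneg_left hmono2 hC₀.le)
  have key := geod_key g x i j k hij hik hjk μ ε D hε0 hεb hD0 hA hdgb
  refine le_trans (le_of_eq (by norm_num)) (key.trans (le_of_eq ?_))
  have hexp : L^(-τ) * L^(-τ-1) = L^(-2*τ-1) := by
    rw [← Real.rpow_add hL0]; congr 1; ring
  calc 2000*(ε*D) = 2000*C₀^2 * (L^(-τ) * L^(-τ-1)) := by rw [hε, hD]; ring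
    _ = 2000*C₀^2 * L^(-2*τ-1) := by rw [hexp]
end
end

section
/- There exist constants C > 0 and L₀ > r₀ such that for every L ≥ L₀, every i ∈ {1,2,3}, every sign μ ∈ {+,−}, and every point x of the face F^{(i)}_{μ,L}, | H(x) − Σ_{k≠i} κ^{(k)}(x) | ≤ C·L^{−2τ−1}, where for each k ≠ i, κ^{(k)}(x) is the geodesic curvature at x of the slicing curve C^{(k)}_{x^k} through x. (The mean curvature of a face equals the sum of the geodesic curvatures of the two coordinate slicing curves through the point, up to O(L^{−2τ−1}).) -/
open Real MeasureTheory

noncomputable section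

/-! ### Auxiliary lemmas for the main theorem -/

lemma MCaux.pb {a b x y : ℝ} (ha : |a| ≤ x) (hb : |b| ≤ y) : |a*b| ≤ x*y := by
  rw [abs_mul]; exact mul_le_mul ha hb (abs_nonneg b) ((abs_nonneg a).trans ha)

lemma MCaux.inv_entry_est {d c dl ε : ℝ} (hd : |d - 1| ≤ 4*ε) (hc : |c - dl| ≤ 3*ε)
    (hdl : |dl| ≤ 1) (hε0 : 0 ≤ ε) (hε1 : ε ≤ 1/100) : |d⁻¹ * c - dl| ≤ 8*ε := by
  have hd' := abs_le.1 hd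
  have hd9 : (96:ℝ)/100 ≤ d := by linarith
  have hdne : d ≠ 0 := by linarith
  have heq : d⁻¹ * c - dl = d⁻¹ * ((c - dl) + dl*(1 - d)) := by field_simp; ring
  rw [heq, abs_mul, abs_inv]
  have h1 : |c - dl + dl*(1-d)| ≤ 7*ε := by
    have hd2 : |1 - d| ≤ 4*ε := by rw [abs_sub_comm]; exact hd
    have h2 := abs_le.1 (MCaux.pb hdl hd2)
    have h3 := abs_le.1 hc
    rw [abs_le]; constructor <;> nlinarith
  have h2 : |d|⁻¹ ≤ 100/96 := by
    rw [abs_of_pos (by linarith)]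
    rw [inv_le_comm₀ (by linarith) (by norm_num)]; linarith
  calc |d|⁻¹ * |c - dl + dl*(1-d)| ≤ (100/96) * (7*ε) :=
        mul_le_mul h2 h1 (abs_nonneg _) (by norm_num)
    _ ≤ 8*ε := by linarith

set_option maxHeartbeats 2000000 in
lemma MCaux.inv_bounds (A : Matrix (Fin 3) (Fin 3) ℝ) (ε : ℝ) (hε0 : 0 ≤ ε) (hε1 : ε ≤ 1/100)
    (hA : ∀ m n, |A m n - if m = n then 1 else 0| ≤ ε) :
    ((96:ℝ)/100 ≤ A.det) ∧ (∀ m n, |A⁻¹ m n - if m = n then 1 else 0| ≤ 8 * ε) := by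
  have h00 := abs_le.mp (by simpa using hA 0 0)
  have h11 := abs_le.mp (by simpa using hA 1 1)
  have h22 := abs_le.mp (by simpa using hA 2 2)
  have hall : ∀ m n, |A m n| ≤ 1 + ε := by
    intro m n
    have := hA m n
    have h2 : |A m n| - |(if m = n then (1:ℝ) else 0)| ≤ ε := (abs_sub_abs_le_abs_sub _ _).trans this
    split at h2 <;> simp at h2 <;> linarith [abs_nonneg (A m n)]
  have hoff : ∀ m n, m ≠ n → |A m n| ≤ ε := by
    intro m n h; have := hA m n; rwa [if_neg h, sub_zero] at this
  have p1122 : |A 1 1 * A 2 2 - 1| ≤ 21/10*ε := by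
    rw [abs_le]; constructor <;> nlinarith [h11.1, h11.2, h22.1, h22.2]
  have p0022 : |A 0 0 * A 2 2 - 1| ≤ 21/10*ε := by
    rw [abs_le]; constructor <;> nlinarith [h00.1, h00.2, h22.1, h22.2]
  have p0011 : |A 0 0 * A 1 1 - 1| ≤ 21/10*ε := by
    rw [abs_le]; constructor <;> nlinarith [h00.1, h00.2, h11.1, h11.2]
  have hdet : |A.det - 1| ≤ 4*ε := by
    have e1 := abs_le.1 (MCaux.pb p1122 (hall 0 0))
    have e2 := abs_le.1 (MCaux.pb (hall 0 0) (MCaux.pb (hoff 1 2 (by decide)) (hoff 2 1 (by decide))))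
    have e3 := abs_le.1 (MCaux.pb (hoff 0 1 (by decide)) (MCaux.pb (hoff 1 0 (by decide)) (hall 2 2)))
    have e4 := abs_le.1 (MCaux.pb (hoff 0 1 (by decide)) (MCaux.pb (hoff 1 2 (by decide)) (hoff 2 0 (by decide))))
    have e5 := abs_le.1 (MCaux.pb (hoff 0 2 (by decide)) (MCaux.pb (hoff 1 0 (by decide)) (hoff 2 1 (by decide))))
    have e6 := abs_le.1 (MCaux.pb (hoff 0 2 (by decide)) (MCaux.pb (hall 1 1) (hoff 2 0 (by decide))))
    rw [Matrix.det_fin_three, abs_le]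
    constructor <;> nlinarith [h00.1, h00.2]
  have hdetl : (96:ℝ)/100 ≤ A.det := by have := (abs_le.1 hdet).1; linarith
  refine ⟨hdetl, ?_⟩
  have hadj : ∀ m n, |A.adjugate m n - if m = n then 1 else 0| ≤ 3*ε := by
    intro m n
    fin_cases m <;> fin_cases n <;> rw [Matrix.adjugate_fin_three] <;> norm_num [Fin.ext_iff]
    · have e1 := abs_le.1 p1122
      have e2 := abs_le.1 (MCaux.pb (hoff 1 2 (by decide)) (hoff 2 1 (by decide)))
      rw [abs_le]; constructor <;> nlinarith
    · have e1 := abs_le.1 (MCaux.pb (hoff 0 1 (by decide)) (hall 2 2))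
      have e2 := abs_le.1 (MCaux.pb (hoff 0 2 (by decide)) (hoff 2 1 (by decide)))
      rw [abs_le]; constructor <;> nlinarith
    · have e1 := abs_le.1 (MCaux.pb (hoff 0 1 (by decide)) (hoff 1 2 (by decide)))
      have e2 := abs_le.1 (MCaux.pb (hoff 0 2 (by decide)) (hall 1 1))
      rw [abs_le]; constructor <;> nlinarith
    · have e1 := abs_le.1 (MCaux.pb (hoff 1 0 (by decide)) (hall 2 2))
      have e2 := abs_le.1 (MCaux.pb (hoff 1 2 (by decide)) (hoff 2 0 (by decide)))
      rw [abs_le]; constructor <;> nlinarith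
    · have e1 := abs_le.1 p0022
      have e2 := abs_le.1 (MCaux.pb (hoff 0 2 (by decide)) (hoff 2 0 (by decide)))
      rw [abs_le]; constructor <;> nlinarith
    · have e1 := abs_le.1 (MCaux.pb (hoff 1 2 (by decide)) (hall 0 0))
      have e2 := abs_le.1 (MCaux.pb (hoff 0 2 (by decide)) (hoff 1 0 (by decide)))
      rw [abs_le]; constructor <;> nlinarith
    · have e1 := abs_le.1 (MCaux.pb (hoff 1 0 (by decide)) (hoff 2 1 (by decide)))
      have e2 := abs_le.1 (MCaux.pb (hoff 2 0 (by decide)) (hall 1 1))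
      rw [abs_le]; constructor <;> nlinarith
    · have e1 := abs_le.1 (MCaux.pb (hoff 2 1 (by decide)) (hall 0 0))
      have e2 := abs_le.1 (MCaux.pb (hoff 0 1 (by decide)) (hoff 2 0 (by decide)))
      rw [abs_le]; constructor <;> nlinarith
    · have e1 := abs_le.1 p0011
      have e2 := abs_le.1 (MCaux.pb (hoff 0 1 (by decide)) (hoff 1 0 (by decide)))
      rw [abs_le]; constructor <;> nlinarith
  intro m n
  have hInv : A⁻¹ = A.det⁻¹ • A.adjugate := by
    rw [Matrix.inv_def, Ring.inverse_eq_inv']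
  rw [hInv, Matrix.smul_apply, smul_eq_mul]
  exact MCaux.inv_entry_est hdet (hadj m n) (by split <;> norm_num) hε0 hε1

lemma MCaux.sum3 {M : Type*} [AddCommMonoid M] (i p q : Fin 3) (hip : i ≠ p) (hiq : i ≠ q)
    (hpq : p ≠ q) (f : Fin 3 → M) : ∑ a, f a = f i + f p + f q := by
  have h : (Finset.univ : Finset (Fin 3)) = {i, p, q} := by
    fin_cases i <;> fin_cases p <;> fin_cases q <;> simp_all <;> decide
  rw [h, Finset.sum_insert (by simp [hip, hiq]), Finset.sum_insert (by simp [hpq]),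
    Finset.sum_singleton, add_assoc]

lemma MCaux.sqrt_close {t c : ℝ} (h : |t - 1| ≤ c) (hc : c ≤ 1/2) : |Real.sqrt t - 1| ≤ c := by
  have h' := abs_le.1 h
  have ht : 0 ≤ t := by linarith
  have hs := Real.sq_sqrt ht
  have hnn := Real.sqrt_nonneg t
  have key : (Real.sqrt t - 1) * (Real.sqrt t + 1) = t - 1 := by nlinarith
  rw [abs_le]; constructor <;> nlinarith

lemma MCaux.inv_close {t c : ℝ} (h : |t - 1| ≤ c) (hc0 : 0 ≤ c) (hc : c ≤ 1/10) :
    |t⁻¹ - 1| ≤ 10/9*c := by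
  have h' := abs_le.1 h
  have ht : (9:ℝ)/10 ≤ t := by linarith
  have htpos : (0:ℝ) < t := by linarith
  have heq : t⁻¹ - 1 = (1 - t)/t := by field_simp
  rw [heq, abs_div, abs_of_pos htpos, div_le_iff₀ htpos]
  have h2 : |1 - t| ≤ c := by rw [abs_sub_comm]; exact h
  have := abs_le.1 h2
  nlinarith [abs_nonneg (1-t)]

lemma MCaux.prod1 {u v cu cv : ℝ} (hu : |u-1| ≤ cu) (hv : |v-1| ≤ cv) :
    |u*v - 1| ≤ cu + cv + cu*cv := by
  have h1 := abs_le.1 (MCaux.pb hu hv)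
  have h2 := abs_le.1 hu
  have h3 := abs_le.1 hv
  rw [abs_le]; constructor <;> nlinarith

lemma MCaux.quot1 {N D ε : ℝ} (hN : |N - 1| ≤ ε) (hD : |D - 1| ≤ 3*ε)
    (hε0 : 0 ≤ ε) (hε1 : ε ≤ 1/100) : |N/D - 1| ≤ 5*ε := by
  have h1 := abs_le.1 hN
  have h2 := abs_le.1 hD
  have hDpos : (0:ℝ) < D := by linarith
  have heq : N/D - 1 = (N - D)/D := by field_simp
  rw [heq, abs_div, abs_of_pos hDpos, div_le_iff₀ hDpos]
  have h3 : |N - D| ≤ 4*ε := by rw [abs_le]; constructor <;> nlinarith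
  have := abs_le.1 h3
  nlinarith [abs_nonneg (N - D)]

lemma MCaux.quot0 {N D ε : ℝ} (hN : |N| ≤ 3/2*ε) (hD : |D - 1| ≤ 3*ε)
    (hε0 : 0 ≤ ε) (hε1 : ε ≤ 1/100) : |N/D| ≤ 2*ε := by
  have h2 := abs_le.1 hD
  have hDpos : (0:ℝ) < D := by linarith
  rw [abs_div, abs_of_pos hDpos, div_le_iff₀ hDpos]
  have := abs_le.1 hN
  nlinarith [abs_nonneg N]

lemma MCaux.sumabs3 (f : Fin 3 → ℝ) (c : ℝ) (h : ∀ n, |f n| ≤ c) : |∑ n, f n| ≤ 3*c := by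
  rw [Fin.sum_univ_three]
  have := abs_add_le (f 0 + f 1) (f 2)
  have := abs_add_le (f 0) (f 1)
  linarith [h 0, h 1, h 2]

lemma MCaux.lohi_facts : ∀ i : Fin 3, lo i ≠ i ∧ hi i ≠ i ∧ lo i ≠ hi i ∧
    oth i (lo i) = hi i ∧ oth i (hi i) = lo i := by decide

lemma MCaux.oth_comm : ∀ i k : Fin 3, oth i k = oth k i := by decide

lemma MCaux.lohi_cases : ∀ i k : Fin 3, i ≠ k →
    (lo k = i ∧ hi k = oth i k) ∨ (lo k = oth i k ∧ hi k = i) := by decide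

lemma MCaux.oth_ne : ∀ i k : Fin 3, i ≠ k → oth i k ≠ i ∧ oth i k ≠ k := by decide

lemma MCaux.final5 {T1 T2 T3 T4 T5 ε δ : ℝ} (hε0 : 0 ≤ ε) (hδ0 : 0 ≤ δ)
    (h1 : |T1| ≤ 5*δ*(30*ε)) (h2 : |T2| ≤ 5*δ*(30*ε))
    (h3 : |T3| ≤ 2*(2*ε*(5*δ) + 2*ε*(5*δ)))
    (h4 : |T4| ≤ 4*(5*δ*(2*ε))) (h5 : |T5| ≤ 4*(5*δ*(2*ε))) :
    |T1+T2+T3+T4+T5| ≤ 1000*ε*δ := by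
  have a1 := abs_add_le (T1+T2+T3+T4) T5
  have a2 := abs_add_le (T1+T2+T3) T4
  have a3 := abs_add_le (T1+T2) T3
  have a4 := abs_add_le T1 T2
  nlinarith [mul_nonneg hε0 hδ0]

set_option maxHeartbeats 4000000 in
lemma MCaux.key_estimate (g : Pt → Matrix (Fin 3) (Fin 3) ℝ) (x : Pt) (i : Fin 3) (μ : Bool)
    (ε δ : ℝ) (hε0 : 0 ≤ ε) (hε1 : ε ≤ 1/100) (hδ0 : 0 ≤ δ)
    (hA : ∀ m n, |g x m n - if m = n then 1 else 0| ≤ ε)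
    (hD : ∀ m n k, |dg g m n k x| ≤ δ) :
    |meanCurv g i μ x - ∑ k, (if k = i then 0 else geodCurv g i k μ x)| ≤ 1000 * ε * δ := by
  obtain ⟨hdet96, hB⟩ := MCaux.inv_bounds (g x) ε hε0 hε1 hA
  obtain ⟨hpi, hqi, hpq, hop, hoq⟩ := MCaux.lohi_facts i
  set p := lo i with hp
  set q := hi i with hq
  -- entry bounds
  have hdd : ∀ m, |g x m m - 1| ≤ ε := fun m => by simpa using hA m m
  have hoffd : ∀ m n, m ≠ n → |g x m n| ≤ ε := by
    intro m n h; have := hA m n; rwa [if_neg h, sub_zero] at this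
  have hBall : ∀ m n, |(g x)⁻¹ m n| ≤ 1 + 8*ε := by
    intro m n
    have h1 := hB m n
    have h2 : |(if m = n then (1:ℝ) else 0)| ≤ 1 := by split <;> norm_num
    have := abs_add_le ((g x)⁻¹ m n - if m = n then 1 else 0) (if m = n then (1:ℝ) else 0)
    simp only [sub_add_cancel] at this
    linarith
  -- Christoffel bound
  have hchris : ∀ m a b, |chris g m a b x| ≤ 5*δ := by
    intro m a b
    have hterm : ∀ n, |(g x)⁻¹ m n * (dg g n a b x + dg g n b a x - dg g a b n x)|
        ≤ (1+8*ε) * (3*δ) := by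
      intro n
      refine MCaux.pb (hBall m n) ?_
      have t1 := hD n a b; have t2 := hD n b a; have t3 := hD a b n
      rw [sub_eq_add_neg]
      have a1 := abs_add_le (dg g n a b x + dg g n b a x) (-(dg g a b n x))
      have a2 := abs_add_le (dg g n a b x) (dg g n b a x)
      rw [abs_neg] at a1
      linarith
    have hsum := MCaux.sumabs3 _ ((1+8*ε)*(3*δ)) hterm
    unfold chris
    rw [abs_mul]
    have : |(1:ℝ)/2| = 1/2 := by norm_num
    rw [this]
    nlinarith [abs_nonneg (∑ n, (g x)⁻¹ m n * (dg g n a b x + dg g n b a x - dg g a b n x))]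
  -- inverse column identity
  have hdetne : (g x).det ≠ 0 := by intro h; rw [h] at hdet96; norm_num at hdet96
  have hmul := Matrix.mul_nonsing_inv (g x) (isUnit_iff_ne_zero.2 hdetne)
  have hABcol : ∀ m n, (∑ j, g x m j * (g x)⁻¹ j n) = if m = n then 1 else 0 := by
    intro m n
    have h1 := congrFun (congrFun hmul m) n
    rwa [Matrix.mul_apply, Matrix.one_apply] at h1
  -- sqrt of B i i
  have hBii : |(g x)⁻¹ i i - 1| ≤ 8*ε := by simpa using hB i i
  have hsB : |Real.sqrt ((g x)⁻¹ i i) - 1| ≤ 8*ε := MCaux.sqrt_close hBii (by linarith)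
  have hsBinv : |(Real.sqrt ((g x)⁻¹ i i))⁻¹ - 1| ≤ 10/9*(8*ε) :=
    MCaux.inv_close hsB (by linarith) (by linarith)
  -- collapse of the normal-vector contraction
  have hinner : ∀ a b, (∑ m, ∑ n, chris g m a b x * g x m n * nuc g i μ n x)
      = sgn μ * (Real.sqrt ((g x)⁻¹ i i))⁻¹ * chris g i a b x := by
    intro a b
    have h1 : ∀ m, (∑ n, chris g m a b x * g x m n * nuc g i μ n x)
        = chris g m a b x * (sgn μ * (Real.sqrt ((g x)⁻¹ i i))⁻¹) * (if m = i then 1 else 0) := by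
      intro m
      have h2 : (∑ n, chris g m a b x * g x m n * nuc g i μ n x)
          = chris g m a b x * (sgn μ * (Real.sqrt ((g x)⁻¹ i i))⁻¹)
            * (∑ n, g x m n * (g x)⁻¹ n i) := by
        rw [Finset.mul_sum]
        refine Finset.sum_congr rfl fun n _ => ?_
        simp only [nuc]
        ring
      rw [h2, hABcol m i]
    simp only [h1, mul_ite, mul_one, mul_zero]
    rw [Finset.sum_ite_eq' Finset.univ i
      (fun m => chris g m a b x * (sgn μ * (Real.sqrt ((g x)⁻¹ i i))⁻¹))]
    simp only [Finset.mem_univ, if_true]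
    ring
  -- closed form of the mean curvature
  have hMC : meanCurv g i μ x = -(sgn μ * (Real.sqrt ((g x)⁻¹ i i))⁻¹ *
      (hinv g i p p x * chris g i p p x + hinv g i p q x * chris g i p q x
       + hinv g i q p x * chris g i q p x + hinv g i q q x * chris g i q q x)) := by
    unfold meanCurv
    simp only [hinner]
    rw [MCaux.sum3 i p q (Ne.symm hpi) (Ne.symm hqi) hpq]
    rw [MCaux.sum3 i p q (Ne.symm hpi) (Ne.symm hqi) hpq]
    rw [MCaux.sum3 i p q (Ne.symm hpi) (Ne.symm hqi) hpq]
    rw [MCaux.sum3 i p q (Ne.symm hpi) (Ne.symm hqi) hpq]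
    simp [hpi, hqi]
    ring
  -- hdet bounds for all k ≠ i
  have pd : ∀ a b : Fin 3, |g x a a * g x b b - 1| ≤ 21/10*ε := by
    intro a b
    have h1 := abs_le.1 (hdd a)
    have h2 := abs_le.1 (hdd b)
    rw [abs_le]; constructor <;> nlinarith [h1.1, h1.2, h2.1, h2.2]
  have hfacts : ∀ k, k ≠ i → |hdet g k x - 1| ≤ 3*ε := by
    intro k hki
    obtain ⟨hji, hjk⟩ := MCaux.oth_ne i k (Ne.symm hki)
    have hDk : hdet g k x = g x i i * g x (oth i k) (oth i k)
        - g x i (oth i k) * g x (oth i k) i := by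
      rcases MCaux.lohi_cases i k (Ne.symm hki) with ⟨h1, h2⟩ | ⟨h1, h2⟩ <;>
        · unfold hdet; rw [h1, h2]; try ring
    rw [hDk]
    have e1 := abs_le.1 (pd i (oth i k))
    have e2 := abs_le.1 (MCaux.pb (hoffd i (oth i k) (Ne.symm hji)) (hoffd (oth i k) i hji))
    rw [abs_le]; constructor <;> nlinarith
  -- closed form of geodesic curvatures
  have hgeod : ∀ k, k ≠ i →
      geodCurv g i k μ x = -((1 / g x (oth i k) (oth i k))
        * (sgn μ * (Real.sqrt (g x (oth i k) (oth i k) / hdet g k x))⁻¹)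
        * (chris g i (oth i k) (oth i k) x + chris g k (oth i k) (oth i k) x *
          ((g x k i * g x (oth i k) (oth i k) - g x k (oth i k) * g x (oth i k) i)
            / hdet g k x))) := by
    intro k hki
    obtain ⟨hji, hjk⟩ := MCaux.oth_ne i k (Ne.symm hki)
    have hDkbd := hfacts k hki
    have hDkpos : (0:ℝ) < hdet g k x := by have := (abs_le.1 hDkbd).1; linarith
    have hDkne : hdet g k x ≠ 0 := ne_of_gt hDkpos
    have hDk : hdet g k x = g x i i * g x (oth i k) (oth i k)
        - g x i (oth i k) * g x (oth i k) i := by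
      rcases MCaux.lohi_cases i k (Ne.symm hki) with ⟨h1, h2⟩ | ⟨h1, h2⟩ <;>
        · unfold hdet; rw [h1, h2]; try ring
    have hkii : hinv g k i i x = g x (oth i k) (oth i k) / hdet g k x := by
      unfold hinv; rw [if_pos rfl, MCaux.oth_comm k i]
    have hkji : hinv g k (oth i k) i x = -(g x (oth i k) i) / hdet g k x := by
      unfold hinv; rw [if_neg hji]
    have hin2 : ∀ m, (∑ n, chris g m (oth i k) (oth i k) x * g x m n * nubar g i k μ n x)
        = chris g m (oth i k) (oth i k) x
          * (sgn μ * (Real.sqrt (g x (oth i k) (oth i k) / hdet g k x))⁻¹)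
          * ((g x m i * g x (oth i k) (oth i k) - g x m (oth i k) * g x (oth i k) i)
            / hdet g k x) := by
      intro m
      rw [MCaux.sum3 k i (oth i k) hki (Ne.symm hjk) (Ne.symm hji)]
      simp only [nubar, eq_self_iff_true, if_true, if_neg (Ne.symm hki : ¬ i = k),
        if_neg (hjk : ¬ oth i k = k)]
      rw [hkii, hkji]
      ring
    unfold geodCurv
    simp only [hin2]
    rw [MCaux.sum3 i (oth i k) k (Ne.symm hji) (Ne.symm hki) hjk]
    rw [show (g x i i * g x (oth i k) (oth i k) - g x i (oth i k) * g x (oth i k) i)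
        / hdet g k x = 1 from by rw [← hDk]; exact div_self hDkne]
    rw [show (g x (oth i k) i * g x (oth i k) (oth i k)
          - g x (oth i k) (oth i k) * g x (oth i k) i) / hdet g k x = 0 from by
      rw [show g x (oth i k) i * g x (oth i k) (oth i k)
          - g x (oth i k) (oth i k) * g x (oth i k) i = 0 from by ring, zero_div]]
    ring
  have hgp := hgeod p hpi
  rw [hop] at hgp
  have hgq := hgeod q hqi
  rw [hoq] at hgq
  -- sum of the two geodesic curvatures
  have hksum : (∑ k, (if k = i then 0 else geodCurv g i k μ x))
      = geodCurv g i p μ x + geodCurv g i q μ x := by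
    rw [MCaux.sum3 i p q (Ne.symm hpi) (Ne.symm hqi) hpq]
    simp [hpi, hqi]
  -- values of hinv on the face i
  have hdeti : hdet g i x = g x p p * g x q q - g x p q * g x q p := by
    unfold hdet; rw [← hp, ← hq]
  have hDibd : |hdet g i x - 1| ≤ 3*ε := by
    rw [hdeti]
    have e1 := abs_le.1 (pd p q)
    have e2 := abs_le.1 (MCaux.pb (hoffd p q hpq) (hoffd q p (Ne.symm hpq)))
    rw [abs_le]; constructor <;> nlinarith
  have hppv : hinv g i p p x = g x q q / hdet g i x := by
    unfold hinv; rw [if_pos rfl, hop]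
  have hqqv : hinv g i q q x = g x p p / hdet g i x := by
    unfold hinv; rw [if_pos rfl, hoq]
  have hpqv : hinv g i p q x = -(g x p q) / hdet g i x := by
    unfold hinv; rw [if_neg hpq]
  have hqpv : hinv g i q p x = -(g x q p) / hdet g i x := by
    unfold hinv; rw [if_neg (Ne.symm hpq)]
  -- quantitative bounds on the factors
  have hDp := hfacts p hpi
  have hDq := hfacts q hqi
  have hyP : |(Real.sqrt (g x q q / hdet g p x))⁻¹ - 1| ≤ 6*ε := by
    have h1 := MCaux.quot1 (hdd q) hDp hε0 hε1
    have h2 := MCaux.sqrt_close h1 (by linarith)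
    have h3 := MCaux.inv_close h2 (by linarith) (by linarith)
    linarith [h3]
  have hyQ : |(Real.sqrt (g x p p / hdet g q x))⁻¹ - 1| ≤ 6*ε := by
    have h1 := MCaux.quot1 (hdd p) hDq hε0 hε1
    have h2 := MCaux.sqrt_close h1 (by linarith)
    have h3 := MCaux.inv_close h2 (by linarith) (by linarith)
    linarith [h3]
  have huP : |(g x p p)⁻¹ - 1| ≤ 2*ε := by
    have := MCaux.inv_close (hdd p) hε0 (by linarith)
    linarith
  have huQ : |(g x q q)⁻¹ - 1| ≤ 2*ε := by
    have := MCaux.inv_close (hdd q) hε0 (by linarith)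
    linarith
  have hsB9 : |(Real.sqrt ((g x)⁻¹ i i))⁻¹ - 1| ≤ 9*ε := by linarith [hsBinv]
  have hQi1 : |g x q q / hdet g i x - 1| ≤ 5*ε := MCaux.quot1 (hdd q) hDibd hε0 hε1
  have hQi2 : |g x p p / hdet g i x - 1| ≤ 5*ε := MCaux.quot1 (hdd p) hDibd hε0 hε1
  have hEp : |(g x p i * g x q q - g x p q * g x q i) / hdet g p x| ≤ 2*ε := by
    refine MCaux.quot0 ?_ hDp hε0 hε1
    have e1 := abs_le.1 (MCaux.pb (hoffd p i hpi) (by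
      have := abs_le.1 (hdd q); rw [abs_le]; constructor <;> linarith : |g x q q| ≤ 1+ε))
    have e2 := abs_le.1 (MCaux.pb (hoffd p q hpq) (hoffd q i hqi))
    rw [abs_le]; constructor <;> nlinarith
  have hEq : |(g x q i * g x p p - g x q p * g x p i) / hdet g q x| ≤ 2*ε := by
    refine MCaux.quot0 ?_ hDq hε0 hε1
    have e1 := abs_le.1 (MCaux.pb (hoffd q i hqi) (by
      have := abs_le.1 (hdd p); rw [abs_le]; constructor <;> linarith : |g x p p| ≤ 1+ε))
    have e2 := abs_le.1 (MCaux.pb (hoffd q p (Ne.symm hpq)) (hoffd p i hpi))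
    rw [abs_le]; constructor <;> nlinarith
  have hvpq : |(-(g x p q)) / hdet g i x| ≤ 2*ε := by
    refine MCaux.quot0 ?_ hDibd hε0 hε1
    rw [abs_neg]; have := hoffd p q hpq; linarith
  have hvqp : |(-(g x q p)) / hdet g i x| ≤ 2*ε := by
    refine MCaux.quot0 ?_ hDibd hε0 hε1
    rw [abs_neg]; have := hoffd q p (Ne.symm hpq); linarith
  -- brackets
  have hbr1 : |(1 / g x p p) * (Real.sqrt (g x p p / hdet g q x))⁻¹
      - (Real.sqrt ((g x)⁻¹ i i))⁻¹ * (g x q q / hdet g i x)| ≤ 30*ε := by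
    have e1 : |(1 / g x p p) * (Real.sqrt (g x p p / hdet g q x))⁻¹ - 1| ≤ 9*ε := by
      have h0 : |1 / g x p p - 1| ≤ 2*ε := by rw [one_div]; exact huP
      have := MCaux.prod1 h0 hyQ
      nlinarith
    have e2 : |(Real.sqrt ((g x)⁻¹ i i))⁻¹ * (g x q q / hdet g i x) - 1| ≤ 15*ε := by
      have := MCaux.prod1 hsB9 hQi1
      nlinarith
    have f1 := abs_le.1 e1
    have f2 := abs_le.1 e2
    rw [abs_le]; constructor <;> linarith
  have hbr2 : |(1 / g x q q) * (Real.sqrt (g x q q / hdet g p x))⁻¹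
      - (Real.sqrt ((g x)⁻¹ i i))⁻¹ * (g x p p / hdet g i x)| ≤ 30*ε := by
    have e1 : |(1 / g x q q) * (Real.sqrt (g x q q / hdet g p x))⁻¹ - 1| ≤ 9*ε := by
      have h0 : |1 / g x q q - 1| ≤ 2*ε := by rw [one_div]; exact huQ
      have := MCaux.prod1 h0 hyP
      nlinarith
    have e2 : |(Real.sqrt ((g x)⁻¹ i i))⁻¹ * (g x p p / hdet g i x) - 1| ≤ 15*ε := by
      have := MCaux.prod1 hsB9 hQi2
      nlinarith
    have f1 := abs_le.1 e1
    have f2 := abs_le.1 e2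
    rw [abs_le]; constructor <;> linarith
  have hsBabs : |(Real.sqrt ((g x)⁻¹ i i))⁻¹| ≤ 2 := by
    have := abs_le.1 hsB9
    rw [abs_le]; constructor <;> linarith
  have hfac1 : |(1 / g x q q) * (Real.sqrt (g x q q / hdet g p x))⁻¹| ≤ 4 := by
    have h0 : |1 / g x q q| ≤ 2 := by
      rw [one_div]; have := abs_le.1 huQ; rw [abs_le]; constructor <;> linarith
    have h1 : |(Real.sqrt (g x q q / hdet g p x))⁻¹| ≤ 2 := by
      have := abs_le.1 hyP; rw [abs_le]; constructor <;> linarith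
    have := MCaux.pb h0 h1; linarith
  have hfac2 : |(1 / g x p p) * (Real.sqrt (g x p p / hdet g q x))⁻¹| ≤ 4 := by
    have h0 : |1 / g x p p| ≤ 2 := by
      rw [one_div]; have := abs_le.1 huP; rw [abs_le]; constructor <;> linarith
    have h1 : |(Real.sqrt (g x p p / hdet g q x))⁻¹| ≤ 2 := by
      have := abs_le.1 hyQ; rw [abs_le]; constructor <;> linarith
    have := MCaux.pb h0 h1; linarith
  -- the decomposition
  have hsplit : meanCurv g i μ x - ∑ k, (if k = i then 0 else geodCurv g i k μ x)
      = sgn μ * (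
        chris g i p p x * ((1 / g x p p) * (Real.sqrt (g x p p / hdet g q x))⁻¹
          - (Real.sqrt ((g x)⁻¹ i i))⁻¹ * (g x q q / hdet g i x))
        + chris g i q q x * ((1 / g x q q) * (Real.sqrt (g x q q / hdet g p x))⁻¹
          - (Real.sqrt ((g x)⁻¹ i i))⁻¹ * (g x p p / hdet g i x))
        + (-(Real.sqrt ((g x)⁻¹ i i))⁻¹) * ((-(g x p q) / hdet g i x) * chris g i p q x
          + (-(g x q p) / hdet g i x) * chris g i q p x)
        + ((1 / g x q q) * (Real.sqrt (g x q q / hdet g p x))⁻¹)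
          * (chris g p q q x * ((g x p i * g x q q - g x p q * g x q i) / hdet g p x))
        + ((1 / g x p p) * (Real.sqrt (g x p p / hdet g q x))⁻¹)
          * (chris g q p p x * ((g x q i * g x p p - g x q p * g x p i) / hdet g q x))) := by
    rw [hMC, hksum, hgp, hgq, hppv, hqqv, hpqv, hqpv]
    ring
  rw [hsplit, abs_mul]
  have habssgn : |sgn μ| = 1 := by cases μ <;> simp [sgn]
  rw [habssgn, one_mul]
  exact MCaux.final5 hε0 hδ0 (MCaux.pb (hchris i p p) hbr1) (MCaux.pb (hchris i q q) hbr2)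
    (by
      refine MCaux.pb (by rw [abs_neg]; exact hsBabs) ?_
      have a1 := abs_add_le ((-(g x p q) / hdet g i x) * chris g i p q x)
        ((-(g x q p) / hdet g i x) * chris g i q p x)
      have a2 := MCaux.pb hvpq (hchris i p q)
      have a3 := MCaux.pb hvqp (hchris i q p)
      linarith)
    (MCaux.pb hfac1 (MCaux.pb (hchris p q q) hEp))
    (MCaux.pb hfac2 (MCaux.pb (hchris q p p) hEq))

/-- The mean curvature of a face equals the sum of the geodesic curvatures of the
two coordinate slicing curves through the point, up to O(L^(-2τ-1)). -/
theorem mean_curvature_as_sum_of_geodesic_curvatures (τ r₀ C₀ : ℝ) (hτ : 1/2 < τ) (hr₀ : 0 < r₀) (hC₀ : 0 < C₀)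
    (g : Pt → Matrix (Fin 3) (Fin 3) ℝ) (hg : AsymptFlat τ r₀ C₀ g) :
    ∃ C > 0, ∃ L₀ > r₀, ∀ L ≥ L₀, ∀ i : Fin 3, ∀ μ : Bool,
      ∀ s : ℝ, |s| ≤ L → ∀ u : ℝ, |u| ≤ L →
        |meanCurv g i μ (facePt i (sgn μ * L) s u)
         - ∑ k, (if k = i then 0 else geodCurv g i k μ (facePt i (sgn μ * L) s u))|
        ≤ C * L ^ (-2*τ - 1) := by
  obtain ⟨hsym, hpos, hC2, hg0, hg1, hg2⟩ := hg
  have hτ0 : 0 < τ := by linarith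
  set L₀ : ℝ := max (r₀ + 1) ((100*C₀) ^ (1/τ)) with hL₀
  have hL₀r : r₀ < L₀ := lt_of_lt_of_le (by linarith) (le_max_left _ _)
  refine ⟨1000 * C₀^2, by positivity, L₀, hL₀r, ?_⟩
  intro L hL i μ s hs u hu
  have hLpos : 0 < L := lt_of_lt_of_le (by linarith) (le_trans (le_max_left _ _) hL)
  set x := facePt i (sgn μ * L) s u with hx
  have hLx : L ≤ enorm3 x := by
    have hxi : x i = sgn μ * L := by rw [hx]; simp [facePt]
    unfold enorm3
    rw [Real.le_sqrt' hLpos]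
    calc L^2 = (x i)^2 := by rw [hxi]; cases μ <;> simp [sgn]
      _ ≤ ∑ m, x m ^2 := Finset.single_le_sum (fun m _ => sq_nonneg (x m)) (Finset.mem_univ i)
  have hrx : r₀ < enorm3 x := lt_of_lt_of_le (lt_of_lt_of_le hL₀r hL) hLx
  have hR0 : 0 < enorm3 x := lt_trans hr₀ hrx
  -- ε ≤ 1/100
  have h100 : (0:ℝ) < 100*C₀ := by positivity
  have hL₀τ : 100*C₀ ≤ L₀^τ := by
    have h1 : ((100*C₀) ^ (1/τ)) ^ τ = 100*C₀ := by
      rw [← Real.rpow_mul (le_of_lt h100), one_div_mul_cancel (ne_of_gt hτ0), Real.rpow_one]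
    calc 100*C₀ = ((100*C₀) ^ (1/τ)) ^ τ := h1.symm
      _ ≤ L₀^τ := Real.rpow_le_rpow (Real.rpow_nonneg (le_of_lt h100) _)
          (le_max_right _ _) (le_of_lt hτ0)
  have hRτ : 100*C₀ ≤ (enorm3 x)^τ := by
    refine le_trans hL₀τ ?_
    exact Real.rpow_le_rpow (by positivity) (le_trans hL hLx) (le_of_lt hτ0)
  have hε1 : C₀ * enorm3 x ^ (-τ) ≤ 1/100 := by
    rw [Real.rpow_neg (le_of_lt hR0)]
    have hRτpos : (0:ℝ) < (enorm3 x)^τ := Real.rpow_pos_of_pos hR0 τ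
    have hinv : ((enorm3 x)^τ)⁻¹ * (enorm3 x)^τ = 1 := inv_mul_cancel₀ (ne_of_gt hRτpos)
    nlinarith [mul_nonneg (le_of_lt hC₀) (le_of_lt (inv_pos.2 hRτpos)),
      inv_nonneg.2 (le_of_lt hRτpos)]
  have key := MCaux.key_estimate g x i μ (C₀ * enorm3 x ^ (-τ)) (C₀ * enorm3 x ^ (-τ-1))
    (by positivity) hε1 (by positivity) (hg0 x hrx) (fun m n k => hg1 x hrx m n k)
  refine key.trans ?_
  have h1 : (enorm3 x) ^ (-τ) * (enorm3 x) ^ (-τ-1) = (enorm3 x)^(-2*τ-1) := by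
    rw [← Real.rpow_add hR0]; ring_nf
  have h2 : (enorm3 x)^(-2*τ-1) ≤ L^(-2*τ-1) :=
    Real.rpow_le_rpow_of_nonpos hLpos hLx (by linarith)
  calc 1000 * (C₀ * enorm3 x ^ (-τ)) * (C₀ * enorm3 x ^ (-τ-1))
      = 1000*C₀^2 * ((enorm3 x) ^ (-τ) * (enorm3 x) ^ (-τ-1)) := by ring
    _ = 1000*C₀^2 * (enorm3 x)^(-2*τ-1) := by rw [h1]
    _ ≤ 1000*C₀^2 * L^(-2*τ-1) := by
        have : (0:ℝ) ≤ 1000*C₀^2 := by positivity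
        exact mul_le_mul_of_nonneg_left h2 this
end
end

section
/- There exists a constant C > 0 such that for all x ∈ U, every pair of distinct indices i ≠ j, and all signs μ, λ ∈ {+,−}, | arccos( μλ·g^{ij}(x)/√(g^{ii}(x)·g^{jj}(x)) ) − arccos( −μλ·g_{ij}(x)/√(g_{ii}(x)·g_{jj}(x)) ) | ≤ C·|x|^{−2τ}. (The angle θ between the outward unit normals of two adjacent faces and the corresponding turning angle β of the slicing curve agree up to O(|x|^{−2τ}).) -/
open Real MeasureTheory

noncomputable section

lemma abs_arccos_sub_le {a b : ℝ} (ha : |a| ≤ 1/2) (hb : |b| ≤ 1/2) :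
    |Real.arccos a - Real.arccos b| ≤ 2 * |a - b| := by
  have hmem : ∀ c : ℝ, |c| ≤ 1/2 → c ∈ Set.Icc (-(1/2):ℝ) (1/2) := by
    intro c hc
    rcases abs_le.mp hc with ⟨h1, h2⟩
    exact ⟨by linarith, h2⟩
  have hderiv : ∀ y ∈ Set.Icc (-(1/2):ℝ) (1/2),
      HasDerivWithinAt Real.arcsin (1 / Real.sqrt (1 - y^2)) (Set.Icc (-(1/2):ℝ) (1/2)) y := by
    intro y hy
    have h1 : y ≠ -1 := by intro h; rw [h] at hy; have := hy.1; linarith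
    have h2 : y ≠ 1 := by intro h; rw [h] at hy; have := hy.2; linarith
    exact (Real.hasDerivAt_arcsin h1 h2).hasDerivWithinAt
  have hbound : ∀ y ∈ Set.Icc (-(1/2):ℝ) (1/2), ‖1 / Real.sqrt (1 - y^2)‖ ≤ 2 := by
    intro y hy
    have hy2 : y^2 ≤ 1/4 := by nlinarith [hy.1, hy.2]
    have hs : (1/2:ℝ) ≤ Real.sqrt (1 - y^2) := by
      have h34 : Real.sqrt (1/4) ≤ Real.sqrt (1 - y^2) := Real.sqrt_le_sqrt (by linarith)
      have : Real.sqrt (1/4) = 1/2 := by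
        rw [show (1/4:ℝ) = (1/2)^2 by norm_num, Real.sqrt_sq (by norm_num)]
      linarith
    rw [Real.norm_eq_abs, abs_of_nonneg (by positivity)]
    rw [div_le_iff₀ (by linarith)]
    linarith
  have key := (convex_Icc (-(1/2):ℝ) (1/2)).norm_image_sub_le_of_norm_hasDerivWithin_le
    hderiv hbound (hmem b hb) (hmem a ha)
  have harc : Real.arccos a - Real.arccos b = -(Real.arcsin a - Real.arcsin b) := by
    simp [Real.arccos]
  rw [harc, abs_neg]
  simpa [Real.norm_eq_abs] using key

lemma sum3_bound (c d : Fin 3 → ℝ) (B₁ B₂ : ℝ) (hc : ∀ k, |c k| ≤ B₁)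
    (hd : ∀ k, |d k| ≤ B₂) : |∑ k, c k * d k| ≤ 3 * B₁ * B₂ := by
  have hB₁ : 0 ≤ B₁ := (abs_nonneg _).trans (hc 0)
  have hB₂ : 0 ≤ B₂ := (abs_nonneg _).trans (hd 0)
  have hterm : ∀ k, |c k * d k| ≤ B₁ * B₂ := by
    intro k
    rw [abs_mul]
    exact mul_le_mul (hc k) (hd k) (abs_nonneg _) hB₁
  rw [Fin.sum_univ_three]
  calc |c 0 * d 0 + c 1 * d 1 + c 2 * d 2|
      ≤ |c 0 * d 0 + c 1 * d 1| + |c 2 * d 2| := abs_add_le _ _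
    _ ≤ |c 0 * d 0| + |c 1 * d 1| + |c 2 * d 2| := by linarith [abs_add_le (c 0 * d 0) (c 1 * d 1)]
    _ ≤ 3 * B₁ * B₂ := by linarith [hterm 0, hterm 1, hterm 2]

lemma inv_entry_bounds (A : Matrix (Fin 3) (Fin 3) ℝ) (hA : IsUnit A.det)
    (ε : ℝ) (hε0 : 0 ≤ ε) (hε : ε ≤ 1/100)
    (hE : ∀ i j, |A i j - (if i = j then 1 else 0)| ≤ ε) :
    (∀ i j : Fin 3, |A⁻¹ i j - (if i = j then 1 else 0)| ≤ 6*ε) ∧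
    (∀ i j : Fin 3, |A⁻¹ i j + A i j - 2*(if i = j then (1:ℝ) else 0)| ≤ 18*ε^2) := by
  have hrow : ∀ i j : Fin 3, A⁻¹ i j
      = (if i = j then (1:ℝ) else 0) - ∑ k, A⁻¹ i k * (A k j - if k = j then 1 else 0) := by
    intro i j
    have h1 : ∑ k, A⁻¹ i k * A k j = (if i = j then (1:ℝ) else 0) := by
      rw [← Matrix.mul_apply, Matrix.nonsing_inv_mul A hA, Matrix.one_apply]
    have h2 : ∑ k, A⁻¹ i k * (A k j - if k = j then 1 else 0)
        = (∑ k, A⁻¹ i k * A k j) - A⁻¹ i j := by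
      simp only [mul_sub, Finset.sum_sub_distrib, mul_ite, mul_one, mul_zero,
        Finset.sum_ite_eq', Finset.mem_univ, if_true]
    linarith [h1, h2]
  obtain ⟨p, -, hp⟩ := Finset.exists_max_image (Finset.univ : Finset (Fin 3 × Fin 3))
    (fun q => |A⁻¹ q.1 q.2|) ⟨(0,0), Finset.mem_univ _⟩
  set M := |A⁻¹ p.1 p.2| with hMdef
  have hM : ∀ i j, |A⁻¹ i j| ≤ M := fun i j => hp (i,j) (Finset.mem_univ _)
  have hM0 : 0 ≤ M := abs_nonneg _
  have hMle : M ≤ 1 + 3*M*ε := by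
    have hr := hrow p.1 p.2
    have hS := sum3_bound (fun k => A⁻¹ p.1 k) (fun k => A k p.2 - if k = p.2 then 1 else 0)
      M ε (fun k => hM _ _) (fun k => hE _ _)
    have hδ : |(if p.1 = p.2 then (1:ℝ) else 0)| ≤ 1 := by split <;> norm_num
    calc M = |A⁻¹ p.1 p.2| := rfl
      _ = |(if p.1 = p.2 then (1:ℝ) else 0)
            - ∑ k, A⁻¹ p.1 k * (A k p.2 - if k = p.2 then 1 else 0)| := by rw [← hr]
      _ ≤ |(if p.1 = p.2 then (1:ℝ) else 0)|
            + |∑ k, A⁻¹ p.1 k * (A k p.2 - if k = p.2 then 1 else 0)| := by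
          rw [sub_eq_add_neg]
          exact (abs_add_le _ _).trans (by rw [abs_neg])
      _ ≤ 1 + 3*M*ε := add_le_add hδ hS
  have hM2 : M ≤ 2 := by nlinarith [mul_nonneg hM0 (by linarith : (0:ℝ) ≤ 1/100 - ε)]
  have ha : ∀ i j : Fin 3, |A⁻¹ i j - (if i = j then 1 else 0)| ≤ 6*ε := by
    intro i j
    have hr := hrow i j
    have hS := sum3_bound (fun k => A⁻¹ i k) (fun k => A k j - if k = j then 1 else 0)
      M ε (fun k => hM _ _) (fun k => hE _ _)
    have : A⁻¹ i j - (if i = j then (1:ℝ) else 0)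
        = -∑ k, A⁻¹ i k * (A k j - if k = j then 1 else 0) := by linarith
    rw [this, abs_neg]
    nlinarith
  refine ⟨ha, ?_⟩
  intro i j
  have e1 : ∑ k, (A⁻¹ i k - if i = k then (1:ℝ) else 0) * (A k j - if k = j then 1 else 0)
      = (∑ k, A⁻¹ i k * (A k j - if k = j then 1 else 0))
        - (A i j - if i = j then 1 else 0) := by
    simp only [sub_mul, Finset.sum_sub_distrib, ite_mul, one_mul, zero_mul,
      Finset.sum_ite_eq, Finset.mem_univ, if_true]
  have hr := hrow i j
  have e2 : A⁻¹ i j + A i j - 2*(if i = j then (1:ℝ) else 0)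
      = -∑ k, (A⁻¹ i k - if i = k then (1:ℝ) else 0) * (A k j - if k = j then 1 else 0) := by
    rw [e1]; linarith
  rw [e2, abs_neg]
  have hS := sum3_bound (fun k => A⁻¹ i k - if i = k then (1:ℝ) else 0)
    (fun k => A k j - if k = j then 1 else 0) (6*ε) ε
    (fun k => ha i k) (fun k => hE _ _)
  nlinarith

lemma near_one_mul {a b d : ℝ} (hd : d ≤ 6/100) (ha1 : -d ≤ a - 1) (ha2 : a - 1 ≤ d)
    (hb1 : -d ≤ b - 1) (hb2 : b - 1 ≤ d) : (0.81:ℝ) ≤ a*b ∧ a*b ≤ 1.21 := by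
  constructor <;> nlinarith

set_option maxHeartbeats 1000000 in
lemma core_estimate (ε u v p q p' q' s : ℝ) (hs1 : |s| = 1)
    (hε0 : 0 < ε) (hεs : ε ≤ 1/100)
    (hu : |u| ≤ 6*ε) (hp : |p - 1| ≤ 6*ε) (hq : |q - 1| ≤ 6*ε)
    (hv : |v| ≤ ε) (hp' : |p' - 1| ≤ ε) (hq' : |q' - 1| ≤ ε)
    (huv : |u + v| ≤ 18*ε^2) :
    |Real.arccos (s*u/Real.sqrt (p*q)) - Real.arccos (-s*v/Real.sqrt (p'*q'))|
      ≤ 72*ε^2 := by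
  obtain ⟨hu1, hu2⟩ := abs_le.mp hu
  obtain ⟨hp1, hp2⟩ := abs_le.mp hp
  obtain ⟨hq1, hq2⟩ := abs_le.mp hq
  obtain ⟨hv1, hv2⟩ := abs_le.mp hv
  obtain ⟨hp1', hp2'⟩ := abs_le.mp hp'
  obtain ⟨hq1', hq2'⟩ := abs_le.mp hq'
  set sP := Real.sqrt (p*q) with hsPdef
  set sQ := Real.sqrt (p'*q') with hsQdef
  obtain ⟨hP1, hP2⟩ := near_one_mul (d := 6*ε) (by linarith) hp1 hp2 hq1 hq2
  obtain ⟨hQ1, hQ2⟩ := near_one_mul (d := ε) (by linarith) hp1' hp2' hq1' hq2'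
  have hsqrt81 : Real.sqrt 0.81 = 0.9 := by
    rw [show (0.81:ℝ) = 0.9^2 by norm_num, Real.sqrt_sq (by norm_num)]
  have hsqrt121 : Real.sqrt 1.21 = 1.1 := by
    rw [show (1.21:ℝ) = 1.1^2 by norm_num, Real.sqrt_sq (by norm_num)]
  have hsP1 : (0.9:ℝ) ≤ sP := by
    have h := Real.sqrt_le_sqrt hP1; rw [hsqrt81] at h; exact h
  have hsP2 : sP ≤ 1.1 := by
    have h := Real.sqrt_le_sqrt hP2; rw [hsqrt121] at h; exact h
  have hsQ1 : (0.9:ℝ) ≤ sQ := by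
    have h := Real.sqrt_le_sqrt hQ1; rw [hsqrt81] at h; exact h
  have hsQ2 : sQ ≤ 1.1 := by
    have h := Real.sqrt_le_sqrt hQ2; rw [hsqrt121] at h; exact h
  have hsPsq : sP^2 = p * q := Real.sq_sqrt (by linarith)
  have hsQsq : sQ^2 = p' * q' := Real.sq_sqrt (by linarith)
  have hpp' : |p - p'| ≤ 7*ε := abs_le.mpr ⟨by linarith, by linarith⟩
  have hqq' : |q - q'| ≤ 7*ε := abs_le.mpr ⟨by linarith, by linarith⟩
  have hqa : |q| ≤ 1.06 := abs_le.mpr ⟨by linarith, by linarith⟩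
  have hpa' : |p'| ≤ 1.01 := abs_le.mpr ⟨by linarith, by linarith⟩
  have hD : |sP^2 - sQ^2| ≤ 15*ε := by
    rw [hsPsq, hsQsq]
    have e : p*q - p'*q' = (p - p')*q + p'*(q - q') := by ring
    rw [e]
    calc |(p - p')*q + p'*(q - q')| ≤ |(p - p')*q| + |p'*(q - q')| := abs_add_le _ _
      _ = |p - p'| * |q| + |p'| * |q - q'| := by rw [abs_mul, abs_mul]
      _ ≤ (7*ε)*1.06 + 1.01*(7*ε) :=
          add_le_add (mul_le_mul hpp' hqa (abs_nonneg _) (by linarith))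
            (mul_le_mul hpa' hqq' (abs_nonneg _) (by norm_num))
      _ ≤ 15*ε := by linarith
  have hSpos : (0:ℝ) < sP + sQ := by linarith
  have hsPQdiff : sP - sQ = (sP^2 - sQ^2)/(sP + sQ) := by
    field_simp
    ring
  have hsd : |sP - sQ| ≤ 9*ε := by
    rw [hsPQdiff, abs_div, abs_of_pos hSpos, div_le_iff₀ hSpos]
    have hprod : 0 ≤ ε * (sP + sQ - 1.8) :=
      mul_nonneg hε0.le (by linarith)
    linarith [hD, hprod]
  have hN : |u*sQ + v*sP| ≤ 29*ε^2 := by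
    have e : u*sQ + v*sP = (u+v)*sQ + v*(sP-sQ) := by ring
    rw [e]
    have hsQabs : |sQ| ≤ 1.1 := abs_le.mpr ⟨by linarith, hsQ2⟩
    calc |(u+v)*sQ + v*(sP-sQ)| ≤ |(u+v)*sQ| + |v*(sP-sQ)| := abs_add_le _ _
      _ = |u+v| * |sQ| + |v| * |sP-sQ| := by rw [abs_mul, abs_mul]
      _ ≤ (18*ε^2)*1.1 + ε*(9*ε) :=
          add_le_add (mul_le_mul huv hsQabs (abs_nonneg _) (by positivity))
            (mul_le_mul hv hsd (abs_nonneg _) hε0.le)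
      _ ≤ 29*ε^2 := by linarith [sq_nonneg ε]
  have hsPpos : 0 < sP := by linarith
  have hsQpos : 0 < sQ := by linarith
  have hab : s*u/sP - (-s*v/sQ) = s*(u*sQ+v*sP)/(sP*sQ) := by
    field_simp
    ring
  have hPQ : (0.81:ℝ) ≤ sP*sQ := by
    calc (0.81:ℝ) = 0.9*0.9 := by norm_num
      _ ≤ sP*sQ := mul_le_mul hsP1 hsQ1 (by norm_num) (by linarith)
  have habs2 : |s*u/sP - (-s*v/sQ)| ≤ 36*ε^2 := by
    rw [hab, abs_div, abs_mul, hs1, one_mul, abs_of_pos (by positivity : (0:ℝ) < sP*sQ),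
      div_le_iff₀ (by positivity : (0:ℝ) < sP*sQ)]
    calc |u*sQ + v*sP| ≤ 29*ε^2 := hN
      _ ≤ 36*ε^2*0.81 := by linarith [sq_nonneg ε]
      _ ≤ 36*ε^2*(sP*sQ) := mul_le_mul_of_nonneg_left hPQ (by positivity)
  have haa : |s*u/sP| ≤ 1/2 := by
    rw [abs_div, abs_mul, hs1, one_mul, abs_of_pos hsPpos, div_le_iff₀ hsPpos]
    linarith [hu, hsP1]
  have hbb : |-s*v/sQ| ≤ 1/2 := by
    rw [abs_div, abs_mul, abs_neg, hs1, one_mul, abs_of_pos hsQpos, div_le_iff₀ hsQpos]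
    linarith [hv, hsQ1]
  have hlip := abs_arccos_sub_le haa hbb
  calc |Real.arccos (s*u/sP) - Real.arccos (-s*v/sQ)|
      ≤ 2 * |s*u/sP - (-s*v/sQ)| := hlip
    _ ≤ 2 * (36*ε^2) := by linarith
    _ = 72*ε^2 := by ring

/-- The dihedral-normal angle θ and the corresponding turning angle β agree up to
O(|x|^(-2τ)). -/
theorem theta_beta_comparison (τ r₀ C₀ : ℝ) (hτ : 1/2 < τ) (hr₀ : 0 < r₀) (hC₀ : 0 < C₀)
    (g : Pt → Matrix (Fin 3) (Fin 3) ℝ) (hg : AsymptFlat τ r₀ C₀ g) :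
    ∃ C > 0, ∀ x : Pt, r₀ < enorm3 x → ∀ i j : Fin 3, i ≠ j → ∀ μ lam : Bool,
      |Real.arccos (sgn μ * sgn lam * (g x)⁻¹ i j /
          Real.sqrt ((g x)⁻¹ i i * (g x)⁻¹ j j))
       - Real.arccos (-(sgn μ * sgn lam) * g x i j /
          Real.sqrt (g x i i * g x j j))|
      ≤ C * enorm3 x ^ (-(2*τ)) := by
  obtain ⟨hsym, hpd, hcd, h0, h1, h2⟩ := hg
  have hτ0 : 0 < τ := by linarith
  set R : ℝ := max r₀ (max 1 ((100*C₀) ^ (τ⁻¹))) with hRdef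
  have hR0 : 0 < R := lt_of_lt_of_le hr₀ (le_max_left _ _)
  refine ⟨max (π * R ^ (2*τ)) (80 * C₀^2),
    lt_of_lt_of_le (by positivity) (le_max_left _ _), ?_⟩
  intro x hx i j hij μ lam
  have hn0 : 0 < enorm3 x := lt_trans hr₀ hx
  set n := enorm3 x with hndef
  set ε : ℝ := C₀ * n ^ (-τ) with hεdef
  have hε0 : 0 < ε := by positivity
  set s : ℝ := sgn μ * sgn lam with hsdef
  have hs1 : |s| = 1 := by cases μ <;> cases lam <;> simp [hsdef, sgn]
  set u := (g x)⁻¹ i j with hudef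
  set v := g x i j with hvdef
  set sP := Real.sqrt ((g x)⁻¹ i i * (g x)⁻¹ j j) with hsPdef
  set sQ := Real.sqrt (g x i i * g x j j) with hsQdef
  have hrpow_nonneg : 0 ≤ n ^ (-(2*τ)) := Real.rpow_nonneg hn0.le _
  rcases le_or_gt n R with hcase | hcase
  · -- crude regime: n ≤ R
    have hA1 := Real.arccos_nonneg (s * u / sP)
    have hA2 := Real.arccos_le_pi (s * u / sP)
    have hB1 := Real.arccos_nonneg (-s * v / sQ)
    have hB2 := Real.arccos_le_pi (-s * v / sQ)
    have habs : |Real.arccos (s*u/sP) - Real.arccos (-s*v/sQ)| ≤ π :=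
      abs_le.mpr ⟨by linarith, by linarith⟩
    have hpow : n ^ (2*τ) ≤ R ^ (2*τ) := Real.rpow_le_rpow hn0.le hcase (by linarith)
    have hnpow : 0 < n ^ (2*τ) := Real.rpow_pos_of_pos hn0 _
    have hneg : n ^ (-(2*τ)) = (n ^ (2*τ))⁻¹ := Real.rpow_neg hn0.le _
    have step : π * (n ^ (2*τ)) * (n ^ (2*τ))⁻¹ ≤ π * R ^ (2*τ) * (n ^ (2*τ))⁻¹ := by
      apply mul_le_mul_of_nonneg_right _ (inv_nonneg.mpr hnpow.le)
      exact mul_le_mul_of_nonneg_left hpow pi_pos.le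
    rw [mul_inv_cancel_right₀ hnpow.ne'] at step
    have hfin : π ≤ π * R ^ (2*τ) * n ^ (-(2*τ)) := by rw [hneg]; exact step
    calc |Real.arccos (s*u/sP) - Real.arccos (-s*v/sQ)| ≤ π := habs
      _ ≤ π * R ^ (2*τ) * n ^ (-(2*τ)) := hfin
      _ ≤ max (π * R ^ (2*τ)) (80 * C₀^2) * n ^ (-(2*τ)) :=
          mul_le_mul_of_nonneg_right (le_max_left _ _) hrpow_nonneg
  · -- asymptotic regime: R < n
    have hεsmall : ε ≤ 1/100 := by
      have hX : (100*C₀) ^ (τ⁻¹) ≤ R :=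
        le_trans (le_max_right 1 _) (le_max_right r₀ _)
      have hRτ : (100*C₀ : ℝ) ≤ R ^ τ := by
        calc (100*C₀ : ℝ) = ((100*C₀) ^ (τ⁻¹)) ^ τ :=
              (Real.rpow_inv_rpow (by positivity) (ne_of_gt hτ0)).symm
          _ ≤ R ^ τ := Real.rpow_le_rpow (by positivity) hX hτ0.le
      have h2' : n ^ (-τ) ≤ R ^ (-τ) :=
        Real.rpow_le_rpow_of_nonpos hR0 hcase.le (by linarith)
      have h3 : R ^ (-τ) = (R ^ τ)⁻¹ := Real.rpow_neg hR0.le _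
      have htpos : 0 < R ^ τ := Real.rpow_pos_of_pos hR0 _
      have h5 : C₀ * (R ^ τ)⁻¹ ≤ 1/100 := by
        nlinarith [mul_le_mul_of_nonneg_right hRτ (inv_nonneg.mpr htpos.le),
          mul_inv_cancel₀ htpos.ne']
      calc ε = C₀ * n ^ (-τ) := rfl
        _ ≤ C₀ * (R ^ τ)⁻¹ := by rw [← h3]; exact mul_le_mul_of_nonneg_left h2' hC₀.le
        _ ≤ 1/100 := h5
    have hdetu : IsUnit (g x).det := isUnit_iff_ne_zero.mpr (hpd x hx).det_pos.ne'
    have hE : ∀ a b, |g x a b - if a = b then 1 else 0| ≤ ε := by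
      intro a b; rw [hεdef, hndef]; exact h0 x hx a b
    obtain ⟨hIa, hIb⟩ := inv_entry_bounds (g x) hdetu ε hε0.le hεsmall hE
    have hu : |u| ≤ 6*ε := by have := hIa i j; rwa [if_neg hij, sub_zero] at this
    have hpb : |(g x)⁻¹ i i - 1| ≤ 6*ε := by have := hIa i i; rwa [if_pos rfl] at this
    have hqb : |(g x)⁻¹ j j - 1| ≤ 6*ε := by have := hIa j j; rwa [if_pos rfl] at this
    have hv : |v| ≤ ε := by have := hE i j; rwa [if_neg hij, sub_zero] at this
    have hpb' : |g x i i - 1| ≤ ε := by have := hE i i; rwa [if_pos rfl] at this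
    have hqb' : |g x j j - 1| ≤ ε := by have := hE j j; rwa [if_pos rfl] at this
    have huv : |u + v| ≤ 18*ε^2 := by
      have := hIb i j; rwa [if_neg hij, mul_zero, sub_zero] at this
    have hcore := core_estimate ε u v ((g x)⁻¹ i i) ((g x)⁻¹ j j) (g x i i) (g x j j) s
      hs1 hε0 hεsmall hu hpb hqb hv hpb' hqb' huv
    have hpow2 : (n ^ (-τ)) * (n ^ (-τ)) = n ^ (-(2*τ)) := by
      rw [← Real.rpow_add hn0]; congr 1; ring
    have hε2 : ε^2 = C₀^2 * n ^ (-(2*τ)) := by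
      rw [hεdef, ← hpow2]; ring
    calc |Real.arccos (s*u/sP) - Real.arccos (-s*v/sQ)|
        ≤ 72*ε^2 := hcore
      _ = 72 * C₀^2 * n ^ (-(2*τ)) := by rw [hε2]; ring
      _ ≤ max (π * R ^ (2*τ)) (80 * C₀^2) * n ^ (-(2*τ)) := by
          apply mul_le_mul_of_nonneg_right _ hrpow_nonneg
          exact le_trans (by nlinarith) (le_max_right _ _)
end
end
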